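/- arXiv:2406.03281 — 6 statements merged into one kernel-verified Lean document; each statement's English description precedes it below -/
import Mathlib

section
/- Let A ∈ ℂ^{n×m} be a block matrix with blocks A₁₁ ∈ ℂ^{n₁×m₁}, A₁₂ ∈ ℂ^{n₁×m₂}, A₂₁ ∈ ℂ^{n₂×m₁}, A₂₂ ∈ ℂ^{n₂×m₂} (n₁+n₂=n, m₁+m₂=m). Assume each column of A₁₁ is not in the span of the other columns of the matrix (A₁₁ A₁₂). If the l-th column of A₂₂ (1 ≤ l ≤ m₂) is not in the span of the other columns of A₂₂, then the (m₁+l)-th column of A is not in the span of the other columns of A. -/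
/-- Lemma `matrices`: block matrix `A = [[A₁₁, A₁₂],[A₂₁, A₂₂]]`.
If every column of `A₁₁` is Not-In-Span-Of-Rest w.r.t. `(A₁₁ A₁₂)`, and the `l`-th column
of `A₂₂` is Not-In-Span-Of-Rest w.r.t. `A₂₂`, then the `(m₁+l)`-th column of `A`
is Not-In-Span-Of-Rest w.r.t. `A`. -/
theorem stmt_3 (n₁ n₂ m₁ m₂ : ℕ)
    (A₁₁ : Matrix (Fin n₁) (Fin m₁) ℂ) (A₁₂ : Matrix (Fin n₁) (Fin m₂) ℂ)
    (A₂₁ : Matrix (Fin n₂) (Fin m₁) ℂ) (A₂₂ : Matrix (Fin n₂) (Fin m₂) ℂ)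
    (htop : ∀ j : Fin m₁,
      (fun i : Fin n₁ => A₁₁ i j) ∉
        Submodule.span ℂ
          ((fun j' : Fin m₁ ⊕ Fin m₂ =>
              (fun i : Fin n₁ => Matrix.fromBlocks A₁₁ A₁₂ A₂₁ A₂₂ (Sum.inl i) j'))
            '' {j' | j' ≠ Sum.inl j}))
    (l : Fin m₂)
    (hbot : (fun i : Fin n₂ => A₂₂ i l) ∉
      Submodule.span ℂ ((fun j' : Fin m₂ => (fun i : Fin n₂ => A₂₂ i j')) '' {j' | j' ≠ l})) :
    (fun i : Fin n₁ ⊕ Fin n₂ => Matrix.fromBlocks A₁₁ A₁₂ A₂₁ A₂₂ i (Sum.inr l)) ∉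
      Submodule.span ℂ
        ((fun j' : Fin m₁ ⊕ Fin m₂ =>
            (fun i : Fin n₁ ⊕ Fin n₂ => Matrix.fromBlocks A₁₁ A₁₂ A₂₁ A₂₂ i j'))
          '' {j' | j' ≠ Sum.inr l}) := by
  intro h
  set v : Fin m₁ ⊕ Fin m₂ → (Fin n₁ ⊕ Fin n₂ → ℂ) :=
    fun j' i => Matrix.fromBlocks A₁₁ A₁₂ A₂₁ A₂₂ i j' with hv
  rw [Finsupp.mem_span_image_iff_linearCombination] at h
  obtain ⟨c, hc, hceq⟩ := h
  -- top projection
  let T : (Fin n₁ ⊕ Fin n₂ → ℂ) →ₗ[ℂ] (Fin n₁ → ℂ) := LinearMap.funLeft ℂ ℂ Sum.inl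
  have htopEq : Finsupp.linearCombination ℂ (T ∘ v) c = T (v (Sum.inr l)) := by
    rw [← Finsupp.apply_linearCombination, hceq]
  have hczero : ∀ j : Fin m₁, c (Sum.inl j) = 0 := by
    intro j
    by_contra hcj
    apply htop j
    have hsplit : Finsupp.linearCombination ℂ (T ∘ v) c
        = c (Sum.inl j) • (T ∘ v) (Sum.inl j)
          + Finsupp.linearCombination ℂ (T ∘ v) (c.erase (Sum.inl j)) := by
      conv_lhs => rw [← Finsupp.single_add_erase (Sum.inl j) c]
      rw [map_add, Finsupp.linearCombination_single]
    have key : (T ∘ v) (Sum.inl j) = (c (Sum.inl j))⁻¹ •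
        (T (v (Sum.inr l)) - Finsupp.linearCombination ℂ (T ∘ v) (c.erase (Sum.inl j))) := by
      rw [← htopEq, hsplit]
      rw [add_sub_cancel_right, smul_smul, inv_mul_cancel₀ hcj, one_smul]
    have hmem : (T ∘ v) (Sum.inl j) ∈
        Submodule.span ℂ ((T ∘ v) '' {j' | j' ≠ Sum.inl j}) := by
      rw [key]
      apply Submodule.smul_mem
      apply Submodule.sub_mem
      · exact Submodule.subset_span ⟨Sum.inr l, by simp, rfl⟩
      · rw [Finsupp.mem_span_image_iff_linearCombination]
        refine ⟨c.erase (Sum.inl j), ?_, rfl⟩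
        intro x hx
        rw [Finsupp.support_erase] at hx
        exact (Finset.mem_erase.mp hx).1
    exact hmem
  -- bottom projection
  let B : (Fin n₁ ⊕ Fin n₂ → ℂ) →ₗ[ℂ] (Fin n₂ → ℂ) := LinearMap.funLeft ℂ ℂ Sum.inr
  have hbotEq : Finsupp.linearCombination ℂ (B ∘ v) c = B (v (Sum.inr l)) := by
    rw [← Finsupp.apply_linearCombination, hceq]
  apply hbot
  have : (fun i : Fin n₂ => A₂₂ i l) = B (v (Sum.inr l)) := rfl
  rw [this, ← hbotEq, Finsupp.linearCombination_apply, Finsupp.sum]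
  apply Submodule.sum_mem
  intro j hj
  match j with
  | Sum.inl j₁ =>
      exact absurd (Finsupp.mem_support_iff.mp hj) (by simp [hczero j₁])
  | Sum.inr j₂ =>
      apply Submodule.smul_mem
      apply Submodule.subset_span
      refine ⟨j₂, ?_, rfl⟩
      have := hc hj
      simp only [Set.mem_setOf_eq] at this ⊢
      intro hje; exact this (by rw [hje])
end

section
/- Let X ⊂ [-1,1]^d be finite, T ⊂ 𝕋^d finite with X = {cos(2πt) : t ∈ T} (componentwise cosine), and I ⊂ ℕ₀^d finite. Then the Chebyshev matrix C(X,I) = (T_k(x))_{x∈X, k∈I} has full column rank |I| if and only if ker(F(T, M(I))) ∩ Im(B(I)) = {0}, where F(T, M(I)) = (e^{2πi h·t})_{t∈T, h∈M(I)} is the Fourier matrix and B(I) is the mirror-connection matrix. -/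
open Real Complex

/-- The normalized `d`-variate Chebyshev polynomial. -/
noncomputable def chebT {d : ℕ} (k : Fin d → ℕ) (x : Fin d → ℝ) : ℝ :=
  ∏ j, if k j = 0 then 1 else Real.sqrt 2 * Real.cos (k j * Real.arccos (x j))

/-- The mirror set `M({k})` of a single multi-index. -/
def mirror {d : ℕ} (k : Fin d → ℕ) : Finset (Fin d → ℤ) :=
  Finset.image (fun l : Fin d → Bool => fun j => if l j then (k j : ℤ) else -(k j : ℤ))
    Finset.univ

/-- The mirrored index set `M(I) = ⋃_{k ∈ I} M({k})`. -/
def mirrorSet {d : ℕ} (I : Finset (Fin d → ℕ)) : Finset (Fin d → ℤ) :=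
  I.biUnion mirror

/-- The Chebyshev sampling matrix `C(X,I) = (T_k(x))_{x∈X,k∈I}`. -/
noncomputable def chebMatrix {d : ℕ} (X : Finset (Fin d → ℝ)) (I : Finset (Fin d → ℕ)) :
    Matrix {x // x ∈ X} {k // k ∈ I} ℝ :=
  fun x k => chebT (k : Fin d → ℕ) (x : Fin d → ℝ)

/-- The Fourier sampling matrix `F(T,J) = (e^{2πi h·t})_{t∈T,h∈J}`. -/
noncomputable def fourierMatrix {d : ℕ} (T : Finset (Fin d → ℝ)) (J : Finset (Fin d → ℤ)) :
    Matrix {t // t ∈ T} {h // h ∈ J} ℂ :=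
  fun t h => Complex.exp (2 * Real.pi * Complex.I * ∑ j, ((h : Fin d → ℤ) j : ℂ) * ((t : Fin d → ℝ) j : ℂ))

/-- The mirror-connection matrix `B(I)` with entries `2^{-‖k‖₀/2}` for `h ∈ M({k})`
and `0` otherwise. -/
noncomputable def mirrorConMatrix {d : ℕ} (I : Finset (Fin d → ℕ)) :
    Matrix {h // h ∈ mirrorSet I} {k // k ∈ I} ℂ :=
  fun h k =>
    if (h : Fin d → ℤ) ∈ mirror (k : Fin d → ℕ) then
      ((Real.rpow 2 (-((Finset.univ.filter fun j => (k : Fin d → ℕ) j ≠ 0).card : ℝ) / 2) : ℝ) : ℂ)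
    else 0

section Aux

set_option linter.unnecessarySeqFocus false
set_option linter.unusedVariables false

lemma mem_mirror_iff {d : ℕ} (k : Fin d → ℕ) (h : Fin d → ℤ) :
    h ∈ mirror k ↔ ∀ j, h j = (k j : ℤ) ∨ h j = -(k j : ℤ) := by
  constructor
  · rintro hm j
    simp only [mirror, Finset.mem_image] at hm
    obtain ⟨l, -, rfl⟩ := hm
    by_cases hl : l j <;> simp [hl]
  · intro hj
    simp only [mirror, Finset.mem_image]
    refine ⟨fun j => decide (h j = (k j : ℤ)), Finset.mem_univ _, ?_⟩
    funext j
    rcases hj j with h1 | h1 <;> by_cases hd : h j = (k j : ℤ) <;> simp [hd, h1] <;> omega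

lemma mirror_eq_piFinset {d : ℕ} (k : Fin d → ℕ) :
    mirror k = Fintype.piFinset (fun j => ({(k j : ℤ), -(k j : ℤ)} : Finset ℤ)) := by
  ext h
  simp [mem_mirror_iff, Fintype.mem_piFinset]

lemma self_mem_mirror {d : ℕ} (k : Fin d → ℕ) : (fun j => (k j : ℤ)) ∈ mirror k := by
  rw [mem_mirror_iff]; intro j; left; rfl

lemma mirror_natAbs {d : ℕ} {k : Fin d → ℕ} {h : Fin d → ℤ} (hm : h ∈ mirror k) :
    ∀ j, (h j).natAbs = k j := by
  intro j
  rcases (mem_mirror_iff k h).mp hm j with h1 | h1 <;> simp [h1]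

lemma mirror_subset {d : ℕ} {I : Finset (Fin d → ℕ)} {k : Fin d → ℕ} (hk : k ∈ I) :
    mirror k ⊆ mirrorSet I := fun h hh => Finset.mem_biUnion.mpr ⟨k, hk, hh⟩

lemma cos_nat_mul_arccos_cos (n : ℕ) (θ : ℝ) :
    Real.cos (n * Real.arccos (Real.cos θ)) = Real.cos (n * θ) := by
  have h1 := Polynomial.Chebyshev.T_real_cos (Real.arccos (Real.cos θ)) n
  have h2 := Polynomial.Chebyshev.T_real_cos θ n
  rw [Real.cos_arccos (Real.neg_one_le_cos θ) (Real.cos_le_one θ)] at h1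
  push_cast at h1 h2
  rw [← h1, h2]

lemma pair_sum (a : ℕ) (x : ℝ) :
    ∑ m ∈ ({(a:ℤ), -(a:ℤ)} : Finset ℤ), Complex.exp (2*Real.pi*Complex.I*((m:ℂ)*(x:ℂ)))
    = if a = 0 then 1 else 2 * ((Real.cos (2*Real.pi*(a*x)) : ℝ) : ℂ) := by
  rcases eq_or_ne a 0 with rfl | ha
  · simp
  · rw [if_neg ha]
    have hne : (a : ℤ) ≠ -(a : ℤ) := by omega
    rw [Finset.sum_pair hne]
    rw [Complex.ofReal_cos, Complex.cos]
    push_cast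
    rw [show ((2:ℂ)*Real.pi*(a*x))*Complex.I = 2*Real.pi*Complex.I*((a:ℂ)*x) by ring,
        show -((2:ℂ)*Real.pi*(a*x))*Complex.I = 2*Real.pi*Complex.I*((-a:ℂ)*x) by ring]
    ring

set_option maxHeartbeats 1000000 in
lemma chebT_eq_sum {d : ℕ} (t : Fin d → ℝ) (k : Fin d → ℕ) :
    ((chebT k (fun j => Real.cos (2*Real.pi*t j)) : ℝ) : ℂ)
    = ∑ h ∈ mirror k, Complex.exp (2*Real.pi*Complex.I*∑ j, ((h j : ℤ) : ℂ)*((t j : ℝ):ℂ))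
      * ((Real.rpow 2 (-(((Finset.univ.filter fun j => k j ≠ 0).card : ℕ) : ℝ)/2) : ℝ) : ℂ) := by
  rw [← Finset.sum_mul]
  have hsum : ∑ h ∈ mirror k, Complex.exp (2*Real.pi*Complex.I*∑ j, ((h j : ℤ) : ℂ)*((t j : ℝ):ℂ))
      = ∏ j, if k j = 0 then 1 else 2 * ((Real.cos (2*Real.pi*(k j * t j)) : ℝ) : ℂ) := by
    calc ∑ h ∈ mirror k, Complex.exp (2*Real.pi*Complex.I*∑ j, ((h j : ℤ) : ℂ)*((t j : ℝ):ℂ))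
        = ∑ h ∈ Fintype.piFinset (fun j => ({(k j : ℤ), -(k j : ℤ)} : Finset ℤ)),
            ∏ j, Complex.exp (2*Real.pi*Complex.I*(((h j : ℤ):ℂ)*((t j : ℝ):ℂ))) := by
          rw [mirror_eq_piFinset]
          exact Finset.sum_congr rfl fun h _ => by rw [Finset.mul_sum, Complex.exp_sum]
      _ = ∏ j, ∑ m ∈ ({(k j : ℤ), -(k j : ℤ)} : Finset ℤ),
            Complex.exp (2*Real.pi*Complex.I*((m:ℂ)*((t j : ℝ):ℂ))) :=
          (Finset.prod_univ_sum (fun j => ({(k j : ℤ), -(k j : ℤ)} : Finset ℤ))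
            (fun j m => Complex.exp (2*Real.pi*Complex.I*((m:ℂ)*((t j : ℝ):ℂ))))).symm
      _ = ∏ j, if k j = 0 then 1 else 2 * ((Real.cos (2*Real.pi*(k j * t j)) : ℝ) : ℂ) :=
          Finset.prod_congr rfl fun j _ => pair_sum (k j) (t j)
  rw [hsum]
  have h2 : (2:ℝ)*(2:ℝ)^(-(1:ℝ)/2) = Real.sqrt 2 := by
    rw [Real.sqrt_eq_rpow]
    nth_rewrite 1 [show (2:ℝ) = (2:ℝ)^(1:ℝ) by norm_num]
    rw [← Real.rpow_add (by norm_num)]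
    norm_num
  have hr : Real.rpow 2 (-(((Finset.univ.filter fun j => k j ≠ 0).card : ℕ) : ℝ)/2)
      = ((2:ℝ)^(-(1:ℝ)/2))^((Finset.univ.filter fun j => k j ≠ 0).card) := by
    rw [show Real.rpow 2 (-(((Finset.univ.filter fun j => k j ≠ 0).card : ℕ) : ℝ)/2)
          = (2:ℝ)^(-(((Finset.univ.filter fun j => k j ≠ 0).card : ℕ) : ℝ)/2) from rfl,
        ← Real.rpow_natCast ((2:ℝ)^(-(1:ℝ)/2)) _, ← Real.rpow_mul (by norm_num)]
    ring_nf
  have hc : ((Real.rpow 2 (-(((Finset.univ.filter fun j => k j ≠ 0).card : ℕ) : ℝ)/2) : ℝ) : ℂ)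
      = ∏ j, if k j = 0 then 1 else (((2:ℝ)^(-(1:ℝ)/2) : ℝ) : ℂ) := by
    rw [Finset.prod_ite, Finset.prod_const, Finset.prod_const, one_pow, one_mul, hr]
    push_cast
    rfl
  rw [hc, ← Finset.prod_mul_distrib]
  simp only [chebT, Complex.ofReal_prod]
  refine Finset.prod_congr rfl fun j _ => ?_
  by_cases hk : k j = 0
  · simp [hk]
  · simp only [if_neg hk]
    have hreal : Real.sqrt 2 * Real.cos ((k j : ℝ) * Real.arccos (Real.cos (2*Real.pi*t j)))
        = (2 * Real.cos (2*Real.pi*((k j : ℝ) * t j))) * (2:ℝ)^(-(1:ℝ)/2) := by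
      rw [cos_nat_mul_arccos_cos (k j) (2*Real.pi*t j),
          show (k j : ℝ) * (2*Real.pi*t j) = 2*Real.pi*((k j : ℝ) * t j) by ring, ← h2]
      ring
    rw [show ((Real.sqrt 2 * Real.cos ((k j : ℝ) * Real.arccos (Real.cos (2*Real.pi*t j))) : ℝ) : ℂ)
          = (((2 * Real.cos (2*Real.pi*((k j : ℝ) * t j))) * (2:ℝ)^(-(1:ℝ)/2) : ℝ) : ℂ) from
        congrArg _ hreal]
    push_cast
    ring

/-- The key matrix identity: `F(T,M(I)) * B(I)` equals (the complexification of) the matrix of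
Chebyshev values at the cosine images of the points of `T`. -/
lemma FB_entry {d : ℕ} (T : Finset (Fin d → ℝ)) (I : Finset (Fin d → ℕ))
    (t : {t // t ∈ T}) (k : {k // k ∈ I}) :
    (fourierMatrix T (mirrorSet I) * mirrorConMatrix I) t k
      = ((chebT (k : Fin d → ℕ) (fun j => Real.cos (2*Real.pi*(t : Fin d → ℝ) j)) : ℝ) : ℂ) := by
  rw [Matrix.mul_apply, chebT_eq_sum]
  have hfilter : (mirrorSet I).filter (fun h => h ∈ mirror (k : Fin d → ℕ)) = mirror (k : Fin d → ℕ) := by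
    ext h
    simp only [Finset.mem_filter]
    exact ⟨fun ⟨_, h2⟩ => h2, fun h2 => ⟨mirror_subset k.2 h2, h2⟩⟩
  calc ∑ h : {h // h ∈ mirrorSet I}, fourierMatrix T (mirrorSet I) t h * mirrorConMatrix I h k
      = ∑ h ∈ mirrorSet I, Complex.exp (2*Real.pi*Complex.I*∑ j, ((h j : ℤ) : ℂ)*(((t : Fin d → ℝ) j : ℝ):ℂ))
          * (if h ∈ mirror (k : Fin d → ℕ) then
              ((Real.rpow 2 (-(((Finset.univ.filter fun j => (k : Fin d → ℕ) j ≠ 0).card : ℕ) : ℝ)/2) : ℝ) : ℂ)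
            else 0) := by
        rw [← Finset.sum_coe_sort (mirrorSet I)]
        exact Finset.sum_congr rfl fun h _ => rfl
    _ = ∑ h ∈ (mirrorSet I).filter (fun h => h ∈ mirror (k : Fin d → ℕ)),
          Complex.exp (2*Real.pi*Complex.I*∑ j, ((h j : ℤ) : ℂ)*(((t : Fin d → ℝ) j : ℝ):ℂ))
          * ((Real.rpow 2 (-(((Finset.univ.filter fun j => (k : Fin d → ℕ) j ≠ 0).card : ℕ) : ℝ)/2) : ℝ) : ℂ) := by
        simp only [mul_ite, mul_zero]
        rw [Finset.sum_ite, Finset.sum_const_zero, add_zero]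
    _ = _ := by rw [hfilter]

/-- B(I) is injective. -/
lemma B_inj {d : ℕ} (I : Finset (Fin d → ℕ)) :
    Function.Injective (mirrorConMatrix I).mulVecLin := by
  rw [← LinearMap.ker_eq_bot, LinearMap.ker_eq_bot']
  intro v hv
  funext k
  have hh0 : (fun j => ((k : Fin d → ℕ) j : ℤ)) ∈ mirrorSet I :=
    mirror_subset k.2 (self_mem_mirror _)
  set h0 : {h // h ∈ mirrorSet I} := ⟨fun j => ((k : Fin d → ℕ) j : ℤ), hh0⟩
  have := congrFun (by simpa [Matrix.mulVecLin_apply] using hv : (mirrorConMatrix I).mulVec v = 0) h0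
  simp only [Matrix.mulVec, dotProduct, Pi.zero_apply] at this
  rw [Finset.sum_eq_single k] at this
  · have hne : mirrorConMatrix I h0 k ≠ 0 := by
      simp only [mirrorConMatrix, h0, if_pos (self_mem_mirror _)]
      exact_mod_cast (Real.rpow_pos_of_pos two_pos _).ne'
    have := mul_eq_zero.mp this
    tauto
  · intro k' _ hk'
    have : (h0 : Fin d → ℤ) ∉ mirror (k' : Fin d → ℕ) := by
      intro hmem
      apply hk'
      apply Subtype.ext
      funext j
      have h1 := mirror_natAbs hmem j
      simpa [h0] using h1.symm
    simp [mirrorConMatrix, this]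
  · intro h
    exact absurd (Finset.mem_univ k) h

/-- real vs complex injectivity for entrywise-real matrices -/
lemma real_complex_inj {m n : Type*} [Fintype m] [Fintype n]
    (A : Matrix m n ℝ) (A' : Matrix m n ℂ) (hA : ∀ i j, A' i j = ((A i j : ℝ) : ℂ)) :
    (∀ v : n → ℝ, A.mulVec v = 0 → v = 0) ↔ (∀ w : n → ℂ, A'.mulVec w = 0 → w = 0) := by
  constructor
  · intro hreal w hw
    have hre : A.mulVec (fun k => (w k).re) = 0 := by
      funext i
      have := congrFun hw i
      simp only [Matrix.mulVec, dotProduct, hA] at this ⊢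
      have := congrArg Complex.re this
      simpa [Complex.re_sum, Complex.mul_re] using this
    have him : A.mulVec (fun k => (w k).im) = 0 := by
      funext i
      have := congrFun hw i
      simp only [Matrix.mulVec, dotProduct, hA] at this ⊢
      have := congrArg Complex.im this
      simpa [Complex.im_sum, Complex.mul_im] using this
    have h1 := hreal _ hre
    have h2 := hreal _ him
    funext k
    have e1 := congrFun h1 k
    have e2 := congrFun h2 k
    simp only [Pi.zero_apply] at e1 e2 ⊢
    exact Complex.ext e1 e2
  · intro hc v hv
    have : A'.mulVec (fun k => ((v k : ℝ) : ℂ)) = 0 := by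
      funext i
      have := congrFun hv i
      simp only [Matrix.mulVec, dotProduct, hA, Pi.zero_apply] at this ⊢
      exact_mod_cast this
    have := hc _ this
    funext k
    have := congrFun this k
    simpa using this

/-- composition kernel criterion -/
lemma ker_comp_eq_bot {R M₁ M₂ M₃ : Type*} [CommRing R] [AddCommGroup M₁] [AddCommGroup M₂]
    [AddCommGroup M₃] [Module R M₁] [Module R M₂] [Module R M₃]
    (f : M₂ →ₗ[R] M₃) (g : M₁ →ₗ[R] M₂) (hg : Function.Injective g) :
    LinearMap.ker (f ∘ₗ g) = ⊥ ↔ LinearMap.ker f ⊓ LinearMap.range g = ⊥ := by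
  constructor
  · intro h
    rw [Submodule.eq_bot_iff]
    rintro x ⟨hx1, y, rfl⟩
    have : y ∈ LinearMap.ker (f ∘ₗ g) := by simpa using hx1
    rw [h, Submodule.mem_bot] at this
    simp [this]
  · intro h
    rw [Submodule.eq_bot_iff]
    intro v hv
    simp only [LinearMap.mem_ker, LinearMap.comp_apply] at hv
    have : g v ∈ LinearMap.ker f ⊓ LinearMap.range g := ⟨hv, v, rfl⟩
    rw [h, Submodule.mem_bot] at this
    exact hg (by simpa using this)

/-- rank = card iff ker = bot, over ℝ -/
lemma rank_eq_card_iff_ker {m n : Type*} [Fintype m] [Fintype n] (A : Matrix m n ℝ) :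
    A.rank = Fintype.card n ↔ LinearMap.ker A.mulVecLin = ⊥ := by
  have hadd := LinearMap.finrank_range_add_finrank_ker A.mulVecLin
  have hdom : Module.finrank ℝ (n → ℝ) = Fintype.card n := Module.finrank_pi ℝ
  rw [hdom] at hadd
  unfold Matrix.rank
  rw [← Submodule.finrank_eq_zero (S := LinearMap.ker A.mulVecLin)]
  omega

end Aux

/-- Lemma `C_full_crank`: with `X = Cos(T)`, the Chebyshev matrix `C(X,I)`
has full column rank `|I|` iff `ker(F(T,M(I))) ∩ Im(B(I)) = {0}`. -/
theorem stmt_8 {d : ℕ} (T : Finset (Fin d → ℝ)) (X : Finset (Fin d → ℝ))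
    (I : Finset (Fin d → ℕ))
    (hX : X = @Finset.image _ _ (Classical.decEq _)
      (fun t : Fin d → ℝ => fun j => Real.cos (2 * Real.pi * t j)) T) :
    (chebMatrix X I).rank = I.card ↔
      LinearMap.ker (fourierMatrix T (mirrorSet I)).mulVecLin
        ⊓ LinearMap.range (mirrorConMatrix I).mulVecLin = ⊥ := by
  classical
  -- the surjection from T-indexed rows onto X-indexed rows
  have hmemX : ∀ t : {t // t ∈ T}, (fun j => Real.cos (2 * Real.pi * (t : Fin d → ℝ) j)) ∈ X := by
    intro t
    rw [hX]
    exact @Finset.mem_image_of_mem _ _ (Classical.decEq _) _ _ _ t.2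
  let g : {t // t ∈ T} → {x // x ∈ X} := fun t => ⟨fun j => Real.cos (2 * Real.pi * (t : Fin d → ℝ) j), hmemX t⟩
  have hgsurj : Function.Surjective g := by
    rintro ⟨x, hx⟩
    rw [hX, @Finset.mem_image _ _ (Classical.decEq _)] at hx
    obtain ⟨t0, ht0, hxt⟩ := hx
    exact ⟨⟨t0, ht0⟩, Subtype.ext hxt⟩
  -- T-indexed real matrix of Chebyshev values
  set Mmat : Matrix {t // t ∈ T} {k // k ∈ I} ℝ :=
    fun t k => chebT (k : Fin d → ℕ) (fun j => Real.cos (2 * Real.pi * (t : Fin d → ℝ) j)) with hMmat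
  have hrow : ∀ (t : {t // t ∈ T}) (v : {k // k ∈ I} → ℝ),
      Mmat.mulVec v t = (chebMatrix X I).mulVec v (g t) := by
    intro t v
    simp only [Matrix.mulVec, dotProduct]
    rfl
  -- step 1: rank condition ↔ real kernel of C is trivial
  rw [show I.card = Fintype.card {k // k ∈ I} from (Fintype.card_coe I).symm,
      rank_eq_card_iff_ker, LinearMap.ker_eq_bot']
  simp only [Matrix.mulVecLin_apply]
  -- step 2: C-kernel ↔ M-kernel
  have step2 : (∀ v, (chebMatrix X I).mulVec v = 0 → v = 0) ↔
      (∀ v, Mmat.mulVec v = 0 → v = 0) := by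
    constructor
    · intro hC v hv
      apply hC v
      funext x
      obtain ⟨t, rfl⟩ := hgsurj x
      rw [← hrow]
      exact congrFun hv t
    · intro hM v hv
      apply hM v
      funext t
      rw [hrow]
      exact congrFun hv (g t)
  rw [step2]
  -- step 3: M-kernel (real) ↔ (F*B)-kernel (complex)
  rw [real_complex_inj Mmat (fourierMatrix T (mirrorSet I) * mirrorConMatrix I)
    (fun t k => FB_entry T I t k)]
  -- step 4: complex kernel of the product ↔ intersection condition
  have := ker_comp_eq_bot (fourierMatrix T (mirrorSet I)).mulVecLin
    (mirrorConMatrix I).mulVecLin (B_inj I)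
  rw [← Matrix.mulVecLin_mul] at this
  rw [← this, LinearMap.ker_eq_bot']
  simp only [Matrix.mulVecLin_apply]
end

section
/- Let T ⊂ 𝕋^d, |T| < ∞, and I ⊂ ℕ₀^d, |I| < ∞. Denote by a_h, h ∈ M(I), the columns of F(T, M(I)) and by c_k, k ∈ I, the columns of C(Cos(T), I). If a_h ∉ span{a_l : l ∈ M(I) \ {h}}, then c_{|h|} ∉ span{c_l : l ∈ I \ {|h|}}. -/
open Real Complex

def sgn' {d : ℕ} (b : Fin d → Bool) (k : Fin d → ℕ) : Fin d → ℤ :=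
  fun j => if b j then (k j : ℤ) else -(k j : ℤ)

lemma factor_aux (k : ℕ) (s : ℝ) :
    ((if k = 0 then (1:ℝ) else Real.sqrt 2 * Real.cos (k * Real.arccos (Real.cos (2*Real.pi*s)))) : ℂ)
    = (if k = 0 then (1/2:ℂ) else (Real.sqrt 2:ℂ)/2) *
      ∑ β : Bool, Complex.exp (2*Real.pi*Complex.I * (((if β then (k:ℤ) else -(k:ℤ)) : ℂ) * (s:ℂ))) := by
  have harc : Real.cos (k * Real.arccos (Real.cos (2*Real.pi*s))) = Real.cos (k * (2*Real.pi*s)) := by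
    have h1 : Real.cos (Real.arccos (Real.cos (2*Real.pi*s))) = Real.cos (2*Real.pi*s) :=
      Real.cos_arccos (Real.neg_one_le_cos _) (Real.cos_le_one _)
    have h2 := Polynomial.Chebyshev.T_real_cos (Real.arccos (Real.cos (2*Real.pi*s))) (k:ℤ)
    have h3 := Polynomial.Chebyshev.T_real_cos (2*Real.pi*s) (k:ℤ)
    rw [h1] at h2
    push_cast at h2 h3
    exact h2.symm.trans h3
  rw [Fintype.sum_bool]
  simp only [reduceIte]
  by_cases hk : k = 0
  · simp [hk]
    norm_num
  · rw [if_neg hk, if_neg hk, harc]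
    norm_num
    have h2c := Complex.two_cos (x := ((k:ℂ) * (2*(Real.pi:ℂ)*(s:ℂ))))
    rw [neg_mul] at h2c
    have e1 : Complex.exp (2*(Real.pi:ℂ)*Complex.I * ((k:ℂ) * (s:ℂ)))
        = Complex.exp (((k:ℂ)*(2*(Real.pi:ℂ)*(s:ℂ))) * Complex.I) := by
      congr 1; ring
    have e2 : Complex.exp (-(2*(Real.pi:ℂ)*Complex.I * ((k:ℂ) * (s:ℂ))))
        = Complex.exp (-(((k:ℂ)*(2*(Real.pi:ℂ)*(s:ℂ))) * Complex.I)) := by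
      congr 1; ring
    rw [e1, e2]
    linear_combination ((Real.sqrt 2 : ℂ) / 2) * h2c

lemma cheb_expand' {d : ℕ} (k : Fin d → ℕ) (t : Fin d → ℝ) :
    ((chebT k (fun j => Real.cos (2 * Real.pi * t j)) : ℝ) : ℂ) =
    (∏ j, if k j = 0 then (1/2 : ℂ) else (Real.sqrt 2 : ℂ)/2) *
      ∑ b : Fin d → Bool,
        Complex.exp (2 * Real.pi * Complex.I * ∑ j, ((sgn' b k j : ℤ) : ℂ) * (t j : ℂ)) := by
  classical
  have hexp : ∀ b : Fin d → Bool,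
      Complex.exp (2 * Real.pi * Complex.I * ∑ j, ((sgn' b k j : ℤ) : ℂ) * (t j : ℂ))
      = ∏ j, Complex.exp (2 * Real.pi * Complex.I *
          (((if b j then (k j:ℤ) else -(k j:ℤ)) : ℂ) * (t j : ℂ))) := by
    intro b; rw [Finset.mul_sum, Complex.exp_sum]
    exact Finset.prod_congr rfl fun j _ => by
      simp [sgn', apply_ite (fun z : ℤ => (z:ℂ))]
  simp_rw [hexp]
  have hps := Finset.prod_univ_sum (fun _ : Fin d => (Finset.univ : Finset Bool))
      (fun j β => Complex.exp (2 * Real.pi * Complex.I *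
        (((if β then (k j:ℤ) else -(k j:ℤ)) : ℂ) * (t j : ℂ))))
  rw [Fintype.piFinset_univ] at hps
  rw [← hps, ← Finset.prod_mul_distrib]
  unfold chebT
  rw [Complex.ofReal_prod]
  simp only [apply_ite (fun r : ℝ => (r:ℂ)), Complex.ofReal_mul]
  exact Finset.prod_congr rfl fun j _ => factor_aux (k j) (t j)

/-- Lemma `C_linear independent_columns`: if the column `a_h` of
`F(T,M(I))` is not in the span of the other columns, then the column `c_{|h|}` of
`C(Cos(T),I)` is not in the span of the other columns. -/
theorem stmt_10 {d : ℕ} (T : Finset (Fin d → ℝ)) (X : Finset (Fin d → ℝ))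
    (I : Finset (Fin d → ℕ))
    (hX : X = @Finset.image _ _ (Classical.decEq _)
      (fun t : Fin d → ℝ => fun j => Real.cos (2 * Real.pi * t j)) T)
    (h : Fin d → ℤ) (hh : h ∈ mirrorSet I) (habs : (fun j => (h j).natAbs) ∈ I)
    (hNISOR : (fun t : {t // t ∈ T} => fourierMatrix T (mirrorSet I) t ⟨h, hh⟩) ∉
      Submodule.span ℂ
        ((fun l : {l // l ∈ mirrorSet I} =>
            (fun t : {t // t ∈ T} => fourierMatrix T (mirrorSet I) t l))
          '' {l | l ≠ ⟨h, hh⟩})) :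
    (fun x : {x // x ∈ X} => chebMatrix X I x ⟨fun j => (h j).natAbs, habs⟩) ∉
      Submodule.span ℝ
        ((fun l : {l // l ∈ I} => (fun x : {x // x ∈ X} => chebMatrix X I x l))
          '' {l | l ≠ ⟨fun j => (h j).natAbs, habs⟩}) := by
  classical
  intro hc
  apply hNISOR
  set k0 : {k // k ∈ I} := ⟨fun j => (h j).natAbs, habs⟩ with hk0def
  set E : (Fin d → ℤ) → ({t // t ∈ T} → ℂ) := fun m t =>
    Complex.exp (2 * Real.pi * Complex.I * ∑ j, (m j : ℂ) * ((t : Fin d → ℝ) j : ℂ)) with hEdef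
  have hmemX : ∀ t : {t // t ∈ T},
      (fun j => Real.cos (2 * Real.pi * (t : Fin d → ℝ) j)) ∈ X := by
    intro t
    simp only [hX, Finset.mem_image]
    exact ⟨t.1, t.2, rfl⟩
  let Φ : ({x // x ∈ X} → ℝ) →ₗ[ℝ] ({t // t ∈ T} → ℂ) :=
    (LinearMap.compLeft (Algebra.linearMap ℝ ℂ) {t // t ∈ T}).comp
      (LinearMap.funLeft ℝ ℝ (fun t : {t // t ∈ T} => (⟨_, hmemX t⟩ : {x // x ∈ X})))
  let colX : {k // k ∈ I} → ({x // x ∈ X} → ℝ) := fun k x => chebMatrix X I x k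
  have hΦ : ∀ K : {k // k ∈ I}, Φ (colX K) = fun t : {t // t ∈ T} =>
      ((chebT K.1 (fun j => Real.cos (2 * Real.pi * (t : Fin d → ℝ) j)) : ℝ) : ℂ) :=
    fun K => rfl
  let C : {k // k ∈ I} → ℂ := fun K => ∏ j, if K.1 j = 0 then (1/2 : ℂ) else (Real.sqrt 2 : ℂ)/2
  have hCne : ∀ K, C K ≠ 0 := by
    intro K
    refine Finset.prod_ne_zero_iff.2 fun j _ => ?_
    split
    · norm_num
    · have h2 : Real.sqrt 2 ≠ 0 := by positivity
      simp [h2]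
  have hsgnmem : ∀ (K : {k // k ∈ I}) (b : Fin d → Bool), sgn' b K.1 ∈ mirrorSet I := by
    intro K b
    exact Finset.mem_biUnion.2 ⟨K.1, K.2, Finset.mem_image.2 ⟨b, Finset.mem_univ _, rfl⟩⟩
  have hF1 : ∀ K : {k // k ∈ I},
      Φ (colX K) = C K • ∑ b : Fin d → Bool, E (sgn' b K.1) := by
    intro K; funext t
    rw [hΦ]
    simp only [Pi.smul_apply, Finset.sum_apply, smul_eq_mul]
    exact cheb_expand' K.1 t.1
  have habsg : ∀ (K : {k // k ∈ I}) (b : Fin d → Bool),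
      (fun j => ((sgn' b K.1 j)).natAbs) = K.1 := by
    intro K b; funext j; simp only [sgn']; split <;> simp
  have hsne : ∀ (K : {k // k ∈ I}), K ≠ k0 → ∀ b, sgn' b K.1 ≠ h := by
    intro K hK b he
    apply hK
    apply Subtype.ext
    rw [← habsg K b, he]
  have hspanK : ∀ K : {k // k ∈ I}, K ≠ k0 →
      Φ (colX K) ∈ Submodule.span ℂ ((fun l : {l // l ∈ mirrorSet I} =>
          (fun t : {t // t ∈ T} => fourierMatrix T (mirrorSet I) t l)) '' {l | l ≠ ⟨h, hh⟩}) := by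
    intro K hK
    rw [hF1]
    refine Submodule.smul_mem _ _ (Submodule.sum_mem _ fun b _ => Submodule.subset_span ?_)
    exact ⟨⟨sgn' b K.1, hsgnmem K b⟩, fun he => hsne K hK b (congrArg Subtype.val he), rfl⟩
  have hc' : Φ (colX k0) ∈ Submodule.span ℝ ((fun K => Φ (colX K)) '' {l | l ≠ k0}) := by
    have h2 := Submodule.mem_map_of_mem (f := Φ) hc
    rw [Submodule.map_span, ← Set.image_comp] at h2
    exact h2
  obtain ⟨n, f, g, hsum⟩ := Submodule.mem_span_set'.1 hc'
  choose L hLne hLeq using fun i => (g i).2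
  set S0 : Finset (Fin d → Bool) := Finset.univ.filter (fun b => sgn' b k0.1 = h) with hS0def
  set S1 : Finset (Fin d → Bool) := Finset.univ.filter (fun b => ¬ sgn' b k0.1 = h) with hS1def
  have hS0ne : S0.Nonempty := by
    refine ⟨fun j => decide (0 ≤ h j), ?_⟩
    simp only [hS0def, Finset.mem_filter, Finset.mem_univ, true_and]
    funext j
    simp only [sgn', hk0def]
    rcases le_or_gt 0 (h j) with h0 | h0
    · simp [h0, Int.natAbs_of_nonneg h0]
    · have h1 : ¬ (0 ≤ h j) := not_le.2 h0
      rw [if_neg (by simp [h1] : ¬ (decide (0 ≤ h j) = true))]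
      omega
  have hsplit : (∑ b : Fin d → Bool, E (sgn' b k0.1)) =
      (S0.card : ℂ) • E h + ∑ b ∈ S1, E (sgn' b k0.1) := by
    rw [← Finset.sum_filter_add_sum_filter_not Finset.univ (fun b => sgn' b k0.1 = h)]
    congr 1
    rw [Finset.sum_congr rfl (fun b hb => by rw [(Finset.mem_filter.1 hb).2]),
      Finset.sum_const]
    exact (Nat.cast_smul_eq_nsmul ℂ _ _).symm
  have hkey : ((S0.card : ℂ) * C k0) • E h
      = Φ (colX k0) - C k0 • ∑ b ∈ S1, E (sgn' b k0.1) := by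
    rw [hF1 k0, hsplit]
    module
  have hne0 : ((S0.card : ℂ) * C k0) ≠ 0 := by
    refine mul_ne_zero ?_ (hCne k0)
    exact_mod_cast Nat.cast_ne_zero.2 (Finset.card_ne_zero.2 hS0ne)
  have hmem : ((S0.card : ℂ) * C k0) • E h ∈ Submodule.span ℂ
      ((fun l : {l // l ∈ mirrorSet I} =>
          (fun t : {t // t ∈ T} => fourierMatrix T (mirrorSet I) t l)) '' {l | l ≠ ⟨h, hh⟩}) := by
    rw [hkey]
    apply Submodule.sub_mem
    · rw [← hsum]
      refine Submodule.sum_mem _ fun i _ => ?_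
      rw [← hLeq i]
      have hr : f i • Φ (colX (L i)) = ((f i : ℝ) : ℂ) • Φ (colX (L i)) := by
        funext t
        simp [Complex.real_smul]
      rw [hr]
      exact Submodule.smul_mem _ _ (hspanK (L i) (hLne i))
    · refine Submodule.smul_mem _ _ (Submodule.sum_mem _ fun b hb => Submodule.subset_span ?_)
      refine ⟨⟨sgn' b k0.1, hsgnmem k0 b⟩, ?_, rfl⟩
      exact fun he => (Finset.mem_filter.1 hb).2 (congrArg Subtype.val he)
  exact (Submodule.smul_mem_iff _ hne0).1 hmem
end

section
/- Fix k ∈ I ⊂ ℕ₀^d with |I| < ∞, and let M be a prime number such that the componentwise reduction mod M is injective on the mirrored set M(I). If a generating vector z is drawn uniformly at random from {0,...,M-1}^d, then the probability that there exists h ∈ M(I) \ {k} with k·z ≡ h·z (mod M) is at most (|M(I)| - 1)/M. -/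
lemma aux_count {d M : ℕ} (hM : Nat.Prime M) (a : Fin d → ℤ) (i₀ : Fin d)
    (ha : ¬ (M : ℤ) ∣ a i₀) :
    (Finset.univ.filter fun z : Fin d → Fin M => (M : ℤ) ∣ ∑ i, a i * (z i : ℤ)).card
      ≤ M ^ (d - 1) := by
  classical
  have hcard : Fintype.card {i : Fin d // i ≠ i₀} = d - 1 := by
    simp [Fintype.card_subtype_compl]
  have key : (Finset.univ.filter fun z : Fin d → Fin M => (M : ℤ) ∣ ∑ i, a i * (z i : ℤ)).card
      ≤ (Finset.univ : Finset ({i : Fin d // i ≠ i₀} → Fin M)).card := by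
    apply Finset.card_le_card_of_injOn (fun z => fun i => z i.1)
    · intro z _; exact Finset.mem_univ _
    · intro z hz w hw hzw
      simp only [Finset.mem_coe, Finset.mem_filter] at hz hw
      have heq : ∀ i, i ≠ i₀ → z i = w i := fun i hi => congrFun hzw ⟨i, hi⟩
      have hdvd : (M : ℤ) ∣ ∑ i, a i * (z i : ℤ) - ∑ i, a i * (w i : ℤ) :=
        dvd_sub hz.2 hw.2
      have hsum : (∑ i, a i * (z i : ℤ)) - ∑ i, a i * (w i : ℤ)
          = a i₀ * ((z i₀ : ℤ) - (w i₀ : ℤ)) := by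
        rw [← Finset.sum_sub_distrib]
        rw [Finset.sum_eq_single i₀]
        · ring
        · intro i _ hi
          rw [heq i hi]; ring
        · intro h; exact absurd (Finset.mem_univ i₀) h
      rw [hsum] at hdvd
      have hp : Prime (M : ℤ) := Int.prime_iff_natAbs_prime.mpr (by simpa using hM)
      have : (M : ℤ) ∣ ((z i₀ : ℤ) - (w i₀ : ℤ)) := (hp.dvd_mul.mp hdvd).resolve_left ha
      have h1 : (z i₀ : ℤ) < M := by exact_mod_cast (z i₀).isLt
      have h2 : (w i₀ : ℤ) < M := by exact_mod_cast (w i₀).isLt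
      have h0 : (0:ℤ) ≤ (z i₀ : ℤ) := Int.ofNat_nonneg _
      have h0' : (0:ℤ) ≤ (w i₀ : ℤ) := Int.ofNat_nonneg _
      have hz0 : (z i₀ : ℤ) = (w i₀ : ℤ) := by
        by_contra hne'
        have hx : (z i₀ : ℤ) - (w i₀ : ℤ) ≠ 0 := sub_ne_zero.mpr hne'
        have hle : (M : ℤ) ≤ |(z i₀ : ℤ) - (w i₀ : ℤ)| :=
          Int.le_of_dvd (abs_pos.mpr hx) ((dvd_abs _ _).mpr this)
        have : |(z i₀ : ℤ) - (w i₀ : ℤ)| < M := abs_lt.mpr ⟨by linarith, by linarith⟩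
        linarith
      have hi₀ : z i₀ = w i₀ := by
        apply Fin.ext; exact_mod_cast hz0
      funext i
      by_cases hi : i = i₀
      · rw [hi]; exact hi₀
      · exact heq i hi
  calc _ ≤ _ := key
    _ = M ^ (d - 1) := by rw [Finset.card_univ, Fintype.card_fun, hcard, Fintype.card_fin]

/-- Lemma `count_aliasing_probability_cheb`: fix `k ∈ I` and a prime `M`
such that reduction mod `M` is injective on the mirrored set `M(I)`. For `z` drawn
uniformly from `{0,…,M-1}^d`, the probability that `k` aliases to some other frequency
of `M(I)` is at most `(|M(I)|-1)/M`; equivalently, the number of such `z` times `M` is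
at most `(|M(I)|-1)·M^d`. -/
theorem stmt_14 {d : ℕ} (I : Finset (Fin d → ℕ)) (k : Fin d → ℕ) (hk : k ∈ I)
    (M : ℕ) (hM : Nat.Prime M)
    (hinj : Set.InjOn (fun h : Fin d → ℤ => fun i => h i % (M : ℤ)) (mirrorSet I)) :
    (Finset.univ.filter fun z : Fin d → Fin M =>
        ∃ h ∈ mirrorSet I, h ≠ (fun j => (k j : ℤ)) ∧
          ((M : ℤ) ∣ ∑ i, (h i - (k i : ℤ)) * (z i : ℤ))).card * M ≤
      ((mirrorSet I).card - 1) * M ^ d := by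
  classical
  set k' : Fin d → ℤ := fun j => (k j : ℤ) with hk'def
  have hk' : k' ∈ mirrorSet I := by
    apply Finset.mem_biUnion.mpr
    exact ⟨k, hk, Finset.mem_image.mpr ⟨fun _ => true, Finset.mem_univ _, by funext j; simp [hk'def]⟩⟩
  rcases Nat.eq_zero_or_pos d with hd | hd
  · subst hd
    have : (Finset.univ.filter fun z : Fin 0 → Fin M =>
        ∃ h ∈ mirrorSet I, h ≠ (fun j => (k j : ℤ)) ∧
          ((M : ℤ) ∣ ∑ i, (h i - (k i : ℤ)) * ((z i : ℕ) : ℤ))) = ∅ := by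
      apply Finset.filter_eq_empty_iff.mpr
      intro z _
      rintro ⟨h, _, hne, _⟩
      exact hne (funext fun i => i.elim0)
    rw [this]; simp
  · -- subset of biUnion
    have hsub : (Finset.univ.filter fun z : Fin d → Fin M =>
        ∃ h ∈ mirrorSet I, h ≠ k' ∧
          ((M : ℤ) ∣ ∑ i, (h i - (k i : ℤ)) * (z i : ℤ)))
        ⊆ ((mirrorSet I).erase k').biUnion (fun h =>
            Finset.univ.filter fun z : Fin d → Fin M =>
              (M : ℤ) ∣ ∑ i, (h i - (k i : ℤ)) * (z i : ℤ)) := by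
      intro z hz
      simp only [Finset.mem_filter] at hz
      obtain ⟨_, h, hh, hne, hdvd⟩ := hz
      exact Finset.mem_biUnion.mpr ⟨h, Finset.mem_erase.mpr ⟨hne, hh⟩,
        Finset.mem_filter.mpr ⟨Finset.mem_univ _, hdvd⟩⟩
    have hbound : ∀ h ∈ (mirrorSet I).erase k',
        (Finset.univ.filter fun z : Fin d → Fin M =>
          (M : ℤ) ∣ ∑ i, (h i - (k i : ℤ)) * (z i : ℤ)).card ≤ M ^ (d - 1) := by
      intro h hh
      obtain ⟨hne, hhS⟩ := Finset.mem_erase.mp hh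
      have : ∃ i₀, ¬ (M : ℤ) ∣ (h i₀ - (k i₀ : ℤ)) := by
        by_contra hcon
        push_neg at hcon
        apply hne
        apply hinj hhS hk'
        funext i
        have hmod : h i ≡ (k i : ℤ) [ZMOD (M : ℤ)] := (Int.modEq_iff_dvd.mpr (hcon i)).symm
        exact hmod
      obtain ⟨i₀, hi₀⟩ := this
      exact aux_count hM (fun i => h i - (k i : ℤ)) i₀ hi₀
    have hcard : (Finset.univ.filter fun z : Fin d → Fin M =>
        ∃ h ∈ mirrorSet I, h ≠ k' ∧
          ((M : ℤ) ∣ ∑ i, (h i - (k i : ℤ)) * (z i : ℤ))).card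
        ≤ ((mirrorSet I).card - 1) * M ^ (d - 1) := by
      calc (Finset.univ.filter fun z : Fin d → Fin M =>
        ∃ h ∈ mirrorSet I, h ≠ k' ∧
          ((M : ℤ) ∣ ∑ i, (h i - (k i : ℤ)) * (z i : ℤ))).card
          ≤ (((mirrorSet I).erase k').biUnion (fun h =>
            Finset.univ.filter fun z : Fin d → Fin M =>
              (M : ℤ) ∣ ∑ i, (h i - (k i : ℤ)) * (z i : ℤ))).card :=
          Finset.card_le_card hsub
        _ ≤ ∑ h ∈ (mirrorSet I).erase k', (Finset.univ.filter fun z : Fin d → Fin M =>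
              (M : ℤ) ∣ ∑ i, (h i - (k i : ℤ)) * (z i : ℤ)).card :=
          Finset.card_biUnion_le
        _ ≤ ∑ _h ∈ (mirrorSet I).erase k', M ^ (d - 1) := Finset.sum_le_sum hbound
        _ = ((mirrorSet I).card - 1) * M ^ (d - 1) := by
            rw [Finset.sum_const, smul_eq_mul, Finset.card_erase_of_mem hk']
    have hd1 : d - 1 + 1 = d := Nat.succ_pred_eq_of_pos hd
    have h2 := Nat.mul_le_mul hcard (le_refl M)
    rw [mul_assoc, ← pow_succ, hd1] at h2
    exact h2
end

section
/- Fix c > 1, δ ∈ (0,1], a finite index set I ⊂ ℕ₀^d, an element k ∈ I, an integer L ≥ ⌈(c/(c-1))² (ln|I| - ln δ)/2⌉, and a prime M ≥ c(|M(I)|-1) such that reduction mod M is injective on M(I). Draw L generating vectors z₁,...,z_L i.i.d. uniformly from {0,...,M-1}^d. Then the probability that for every ℓ ∈ {1,...,L} the frequency k aliases (i.e., ∃ h ∈ M(I)\{k} with k·z_ℓ ≡ h·z_ℓ mod M) is at most e^{-2L((c-1)/c)²} ≤ δ/|I|. -/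
lemma log_key {c : ℝ} (hc : 1 ≤ c) : 2 * ((c-1)/c)^2 ≤ Real.log c := by
  have hc0 : (0:ℝ) < c := lt_of_lt_of_le one_pos hc
  set f : ℝ → ℝ := fun x => Real.log x - 2*(1 - x⁻¹)^2 with hf
  have hsub : Set.Ici (1:ℝ) ⊆ {0}ᶜ := by intro x hx; simp at hx ⊢; intro h; rw [h] at hx; linarith
  have hd : ∀ x : ℝ, x ≠ 0 → HasDerivAt f (x⁻¹ - 2*(2*(1 - x⁻¹)^1 * (-(-(x^2)⁻¹)))) x := by
    intro x hx0
    exact (Real.hasDerivAt_log hx0).sub ((((hasDerivAt_inv hx0).const_sub 1).pow 2).const_mul 2)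
  have hmono : MonotoneOn f (Set.Ici 1) := by
    apply monotoneOn_of_deriv_nonneg (convex_Ici 1)
    · exact (Real.continuousOn_log.mono hsub).sub
        (continuousOn_const.mul (((continuousOn_const.sub (continuousOn_inv₀.mono hsub)).pow 2)))
    · intro x hx
      rw [interior_Ici] at hx
      have hx0 : x ≠ 0 := by intro h; rw [h] at hx; exact absurd hx (by simp)
      exact (hd x hx0).differentiableAt.differentiableWithinAt
    · intro x hx
      rw [interior_Ici] at hx
      have hxpos : (0:ℝ) < x := lt_trans one_pos hx
      have hx0 : x ≠ 0 := ne_of_gt hxpos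
      rw [(hd x hx0).deriv]
      have h1 : x⁻¹ * x = 1 := inv_mul_cancel₀ hx0
      have h2 : (x^2)⁻¹ = x⁻¹ * x⁻¹ := by rw [sq, mul_inv]
      have h3 : (0:ℝ) < x⁻¹ := inv_pos.mpr hxpos
      rw [h2]
      nlinarith [mul_nonneg h3.le (sq_nonneg (1 - 2*x⁻¹))]
  have h1 : f 1 ≤ f c := hmono (by simp) (by simpa using hc) hc
  have h0 : f 1 = 0 := by simp [hf]
  rw [h0] at h1
  have heq : (c-1)/c = 1 - c⁻¹ := by field_simp
  rw [heq]
  simpa [hf] using h1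

lemma count_lin {d M : ℕ} (hM : Nat.Prime M) (a : Fin d → ℤ) (j : Fin d)
    (hj : ¬ (M:ℤ) ∣ a j) :
    (Finset.univ.filter fun z : Fin d → Fin M => (M:ℤ) ∣ ∑ i, a i * (z i : ℤ)).card
      ≤ M ^ (d-1) := by
  classical
  have hcard : Fintype.card ({i : Fin d // i ≠ j} → Fin M) = M ^ (d-1) := by
    rw [Fintype.card_fun, Fintype.card_fin]
    congr 1
    have : Fintype.card {i : Fin d // i ≠ j} = Fintype.card {i : Fin d // ¬ i = j} := rfl
    rw [this, Fintype.card_subtype_compl, Fintype.card_subtype_eq, Fintype.card_fin]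
  rw [← hcard, ← Finset.card_univ]
  apply Finset.card_le_card_of_injOn (fun z (i : {i : Fin d // i ≠ j}) => z i)
    (fun _ _ => Finset.mem_univ _)
  intro z hz z' hz' heq
  simp only [Finset.mem_coe, Finset.mem_filter, Finset.mem_univ, true_and] at hz hz'
  have hne : ∀ i : Fin d, i ≠ j → z i = z' i := fun i hi => congrFun heq ⟨i, hi⟩
  have hsum : ∑ i, a i * (z i : ℤ) - ∑ i, a i * (z' i : ℤ)
      = a j * ((z j : ℤ) - (z' j : ℤ)) := by
    rw [← Finset.sum_sub_distrib, Finset.sum_eq_single j]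
    · ring
    · intro i _ hi; rw [hne i hi]; ring
    · intro h; exact absurd (Finset.mem_univ j) h
  have hdvd : (M:ℤ) ∣ a j * ((z j : ℤ) - (z' j : ℤ)) := hsum ▸ dvd_sub hz hz'
  have hp : Prime (M:ℤ) := Nat.prime_iff_prime_int.mp hM
  have hzj : z j = z' j := by
    rcases hp.dvd_mul.mp hdvd with h | h
    · exact absurd h hj
    · have h1 : ((z j : ℕ):ℤ) < M := by exact_mod_cast (z j).isLt
      have h2 : ((z' j : ℕ):ℤ) < M := by exact_mod_cast (z' j).isLt
      have h3 : (0:ℤ) ≤ ((z j : ℕ):ℤ) := Int.natCast_nonneg _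
      have h4 : (0:ℤ) ≤ ((z' j : ℕ):ℤ) := Int.natCast_nonneg _
      have h0 : ((z j : ℕ):ℤ) - ((z' j : ℕ):ℤ) = 0 := by
        refine Int.eq_zero_of_abs_lt_dvd h ?_
        rw [abs_lt]; constructor <;> linarith
      have : (z j : ℕ) = (z' j : ℕ) := by omega
      exact Fin.ext this
  funext i
  by_cases hij : i = j
  · rw [hij, hzj]
  · exact hne i hij

/-- Theorem `gen_mr1l_cheb`: with `c > 1`, `δ ∈ (0,1]`, `k ∈ I`,
`L ≥ (c/(c-1))²(ln|I| - ln δ)/2`, and a prime `M ≥ c(|M(I)|-1)` such that reduction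
mod `M` is injective on `M(I)`, the probability (over `L` i.i.d. uniform draws
`z₁,…,z_L ∈ {0,…,M-1}^d`) that `k` aliases within `M(I)` on every lattice
`Λ(z_ℓ,M)` is at most `e^{-2L((c-1)/c)²} ≤ δ/|I|`. -/
theorem stmt_16 {d : ℕ} (I : Finset (Fin d → ℕ)) (k : Fin d → ℕ) (hk : k ∈ I)
    (c δ : ℝ) (hc : 1 < c) (hδ : δ ∈ Set.Ioc (0 : ℝ) 1)
    (L : ℕ) (hL : (c / (c - 1)) ^ 2 * (Real.log I.card - Real.log δ) / 2 ≤ (L : ℝ))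
    (M : ℕ) (hM : Nat.Prime M) (hMc : c * ((mirrorSet I).card - 1) ≤ (M : ℝ))
    (hinj : Set.InjOn (fun h : Fin d → ℤ => fun i => h i % (M : ℤ)) (mirrorSet I)) :
    ((Finset.univ.filter fun zs : Fin L → Fin d → Fin M =>
        ∀ ℓ : Fin L, ∃ h ∈ mirrorSet I, h ≠ (fun j => (k j : ℤ)) ∧
          ((M : ℤ) ∣ ∑ i, (h i - (k i : ℤ)) * (zs ℓ i : ℤ))).card : ℝ) ≤
      Real.exp (-2 * (L : ℝ) * ((c - 1) / c) ^ 2) * ((M ^ d : ℕ) : ℝ) ^ (L : ℕ)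
    ∧ Real.exp (-2 * (L : ℝ) * ((c - 1) / c) ^ 2) ≤ δ / I.card := by
  classical
  obtain ⟨hδ0, hδ1⟩ := hδ
  have hc0 : (0:ℝ) < c := lt_trans one_pos hc
  have hc1 : c - 1 ≠ 0 := sub_ne_zero.mpr (ne_of_gt hc)
  set k' : Fin d → ℤ := fun j => (k j : ℤ) with hk'
  have hk'mem : k' ∈ mirrorSet I := by
    simp only [mirrorSet, Finset.mem_biUnion]
    refine ⟨k, hk, ?_⟩
    simp only [mirror, Finset.mem_image]
    exact ⟨fun _ => true, Finset.mem_univ _, by funext j; simp [hk']⟩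
  have hIpos : 0 < I.card := Finset.card_pos.mpr ⟨k, hk⟩
  have hmpos : 0 < (mirrorSet I).card := Finset.card_pos.mpr ⟨k', hk'mem⟩
  have hMpos : 0 < M := hM.pos
  have t_pos : (0:ℝ) < ((c-1)/c)^2 := by positivity
  constructor
  · -- main counting bound
    set bad : Finset (Fin d → Fin M) := Finset.univ.filter
      (fun z => ∃ h ∈ mirrorSet I, h ≠ k' ∧ (M:ℤ) ∣ ∑ i, (h i - (k i : ℤ)) * (z i : ℤ))
      with hbad
    have hfilter : (Finset.univ.filter fun zs : Fin L → Fin d → Fin M =>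
        ∀ ℓ : Fin L, ∃ h ∈ mirrorSet I, h ≠ k' ∧
          ((M : ℤ) ∣ ∑ i, (h i - (k i : ℤ)) * (zs ℓ i : ℤ)))
        = Fintype.piFinset (fun _ : Fin L => bad) := by
      ext zs
      simp [hbad, Fintype.mem_piFinset]
    have hcard : (Finset.univ.filter fun zs : Fin L → Fin d → Fin M =>
        ∀ ℓ : Fin L, ∃ h ∈ mirrorSet I, h ≠ k' ∧
          ((M : ℤ) ∣ ∑ i, (h i - (k i : ℤ)) * (zs ℓ i : ℤ))).card = bad.card ^ L := by
      rw [hfilter, Fintype.card_piFinset]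
      simp
    have hbadle : (bad.card : ℝ) ≤ ((M:ℝ)^d) / c := by
      rcases Nat.eq_zero_or_pos d with hd | hd
      · have hbe : bad = ∅ := by
          rw [Finset.eq_empty_iff_forall_notMem]
          intro z hz
          simp only [hbad, Finset.mem_filter, Finset.mem_univ, true_and] at hz
          obtain ⟨h, _, hne, _⟩ := hz
          apply hne
          funext i
          have hlt : (i : ℕ) < 0 := by rw [← hd]; exact i.isLt
          exact absurd hlt (Nat.not_lt_zero _)
        rw [hbe]
        simp
        positivity
      · have hstep : bad.card ≤ ((mirrorSet I).card - 1) * M^(d-1) := by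
          calc bad.card ≤ ((mirrorSet I \ {k'}).biUnion (fun h => Finset.univ.filter
                (fun z : Fin d → Fin M => (M:ℤ) ∣ ∑ i, (h i - (k i:ℤ))*(z i:ℤ)))).card := by
                apply Finset.card_le_card
                intro z hz
                simp only [hbad, Finset.mem_filter, Finset.mem_univ, true_and] at hz
                obtain ⟨h, hmem, hne, hdvd⟩ := hz
                simp only [Finset.mem_biUnion, Finset.mem_sdiff, Finset.mem_singleton,
                  Finset.mem_filter, Finset.mem_univ, true_and]
                exact ⟨h, ⟨hmem, hne⟩, hdvd⟩
            _ ≤ ∑ h ∈ mirrorSet I \ {k'}, (Finset.univ.filter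
                (fun z : Fin d → Fin M => (M:ℤ) ∣ ∑ i, (h i - (k i:ℤ))*(z i:ℤ))).card :=
                Finset.card_biUnion_le
            _ ≤ (mirrorSet I \ {k'}).card * M^(d-1) := by
                rw [← smul_eq_mul]
                apply Finset.sum_le_card_nsmul
                intro h hmem
                simp only [Finset.mem_sdiff, Finset.mem_singleton] at hmem
                obtain ⟨hmem, hne⟩ := hmem
                obtain ⟨j, hj⟩ : ∃ j, ¬ (M:ℤ) ∣ (h j - (k j : ℤ)) := by
                  by_contra hcon
                  push_neg at hcon
                  apply hne
                  apply hinj hmem hk'mem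
                  funext i
                  show h i % (M:ℤ) = k' i % (M:ℤ)
                  refine Int.modEq_iff_dvd.mpr ?_
                  have hd1 : k' i - h i = -(h i - (k i : ℤ)) := by simp only [hk']; ring
                  rw [hd1]
                  exact dvd_neg.mpr (hcon i)
                exact count_lin hM (fun i => h i - (k i : ℤ)) j hj
            _ = ((mirrorSet I).card - 1) * M^(d-1) := by
                rw [Finset.card_sdiff_of_subset (Finset.singleton_subset_iff.mpr hk'mem),
                  Finset.card_singleton]
        rw [le_div_iff₀ hc0]
        have hcast : (bad.card : ℝ) ≤ (((mirrorSet I).card : ℝ) - 1) * (M:ℝ)^(d-1) := by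
          have := (Nat.cast_le (α := ℝ)).mpr hstep
          push_cast [Nat.cast_sub hmpos] at this
          exact this
        have hMd : (M:ℝ) * (M:ℝ)^(d-1) = (M:ℝ)^d := by
          have hde : d - 1 + 1 = d := Nat.succ_pred_eq_of_pos hd
          rw [← pow_succ', hde]
        have hm1 : (0:ℝ) ≤ ((mirrorSet I).card : ℝ) - 1 := by
          have : (1:ℝ) ≤ ((mirrorSet I).card : ℝ) := by exact_mod_cast hmpos
          linarith
        have hMp : (0:ℝ) ≤ (M:ℝ)^(d-1) := by positivity
        calc (bad.card : ℝ) * c ≤ ((((mirrorSet I).card : ℝ) - 1) * (M:ℝ)^(d-1)) * c :=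
              mul_le_mul_of_nonneg_right hcast hc0.le
          _ = (c * (((mirrorSet I).card : ℝ) - 1)) * (M:ℝ)^(d-1) := by ring
          _ ≤ (M:ℝ) * (M:ℝ)^(d-1) := mul_le_mul_of_nonneg_right hMc hMp
          _ = (M:ℝ)^d := hMd
    have hbc0 : (0:ℝ) ≤ (bad.card : ℝ) := Nat.cast_nonneg _
    have hexp : ((1:ℝ)/c)^L ≤ Real.exp (-2 * (L:ℝ) * ((c-1)/c)^2) := by
      have h1 : ((1:ℝ)/c)^L = Real.exp ((L:ℝ) * (-Real.log c)) := by
        rw [Real.exp_nat_mul]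
        congr 1
        rw [Real.exp_neg, Real.exp_log hc0, one_div]
      rw [h1]
      apply Real.exp_le_exp.mpr
      have h2 := mul_le_mul_of_nonneg_left (log_key hc.le) (Nat.cast_nonneg (α := ℝ) L)
      nlinarith
    calc ((Finset.univ.filter fun zs : Fin L → Fin d → Fin M =>
        ∀ ℓ : Fin L, ∃ h ∈ mirrorSet I, h ≠ k' ∧
          ((M : ℤ) ∣ ∑ i, (h i - (k i : ℤ)) * (zs ℓ i : ℤ))).card : ℝ)
        = ((bad.card : ℝ))^L := by rw [hcard]; push_cast; ring
      _ ≤ ((M:ℝ)^d / c)^L := pow_le_pow_left₀ hbc0 hbadle L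
      _ = ((M:ℝ)^d)^L * ((1:ℝ)/c)^L := by rw [div_pow]; ring
      _ ≤ ((M:ℝ)^d)^L * Real.exp (-2 * (L:ℝ) * ((c-1)/c)^2) :=
          mul_le_mul_of_nonneg_left hexp (by positivity)
      _ = Real.exp (-2 * (L : ℝ) * ((c - 1) / c) ^ 2) * ((M ^ d : ℕ) : ℝ) ^ (L : ℕ) := by
          push_cast
          ring
  · -- probability bound ≤ δ/|I|
    have hinv : ((c/(c-1))^2) * (((c-1)/c)^2) = 1 := by
      field_simp
    have hA : Real.log I.card - Real.log δ ≤ 2 * (L:ℝ) * ((c-1)/c)^2 := by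
      have h2 := mul_le_mul_of_nonneg_right hL t_pos.le
      have key : (c / (c-1)) ^ 2 * (Real.log I.card - Real.log δ) / 2 * ((c-1)/c)^2
          = (Real.log I.card - Real.log δ) / 2 := by
        field_simp
      rw [key] at h2
      linarith
    have heq : δ / (I.card : ℝ) = Real.exp (Real.log δ - Real.log I.card) := by
      rw [Real.exp_sub, Real.exp_log hδ0, Real.exp_log (by exact_mod_cast hIpos)]
    rw [heq]
    apply Real.exp_le_exp.mpr
    linarith
end

section
/- Under the assumptions of the multiple-lattice construction (c > 1, δ ∈ (0,1], prime M ≥ c(|M(I)|-1) with mod-M injective on M(I), L ≥ ⌈(c/(c-1))²(ln|I| - ln δ)/2⌉ i.i.d. uniform generating vectors z₁,...,z_L ∈ {0,...,M-1}^d), the probability that the Chebyshev matrix C(X, I) with X = ⋃_{ℓ=1}^L {cos(2π t) : t ∈ Λ(z_ℓ, M)} has full column rank |I| is at least 1 - δ. -/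
open Real

/-- The union of cosine transformed rank-1 lattices
`⋃_ℓ Cos(Λ(z_ℓ,M)) = ⋃_ℓ {cos(2π(j/M)z_ℓ) : j = 0,…,M-1}` as a finite sampling set. -/
noncomputable def cosLattices {d : ℕ} (L M : ℕ) (zs : Fin L → Fin d → Fin M) :
    Finset (Fin d → ℝ) :=
  @Finset.image _ _ (Classical.decEq _)
    (fun p : Fin L × Fin M =>
      fun i : Fin d => Real.cos (2 * Real.pi * ((p.2 : ℕ) : ℝ) / (M : ℝ) * ((zs p.1 i : ℕ) : ℝ)))
    Finset.univ

namespace S17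
variable {d : ℕ}

def sgn (l : Fin d → Bool) (k : Fin d → ℕ) : Fin d → ℤ :=
  fun j => if l j then (k j : ℤ) else -(k j : ℤ)

lemma sgn_mem_mirror (l : Fin d → Bool) (k : Fin d → ℕ) : sgn l k ∈ mirror k := by
  exact Finset.mem_image.mpr ⟨l, Finset.mem_univ _, rfl⟩

lemma mirror_natAbs {k : Fin d → ℕ} {h : Fin d → ℤ} (hh : h ∈ mirror k) :
    ∀ j, (h j).natAbs = k j := by
  rcases Finset.mem_image.mp hh with ⟨l, -, rfl⟩
  intro j
  by_cases hl : l j <;> simp [hl]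

lemma mirror_disjoint {k k' : Fin d → ℕ} {h : Fin d → ℤ}
    (h1 : h ∈ mirror k) (h2 : h ∈ mirror k') : k = k' := by
  funext j
  rw [← mirror_natAbs h1 j, ← mirror_natAbs h2 j]

lemma cos_nat_arccos_cos (k : ℕ) (φ : ℝ) :
    Real.cos (k * Real.arccos (Real.cos φ)) = Real.cos (k * φ) := by
  have h1 := Polynomial.Chebyshev.T_real_cos (Real.arccos (Real.cos φ)) k
  have h2 := Polynomial.Chebyshev.T_real_cos φ k
  rw [Real.cos_arccos (neg_one_le_cos φ) (cos_le_one φ)] at h1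
  rw [h2] at h1
  push_cast at h1 ⊢
  rw [← h1]

lemma chebT_cos (k : Fin d → ℕ) (t : Fin d → ℝ) :
    chebT k (fun i => Real.cos (2 * Real.pi * t i))
      = ∏ i, (if k i = 0 then (1:ℝ) else Real.sqrt 2) * Real.cos (2 * Real.pi * (k i * t i)) := by
  unfold chebT
  refine Finset.prod_congr rfl fun i _ => ?_
  by_cases hk : k i = 0
  · simp [hk]
  · rw [if_neg hk, if_neg hk, cos_nat_arccos_cos (k i) (2 * Real.pi * t i)]
    ring_nf

lemma chebT_exp (k : Fin d → ℕ) (t : Fin d → ℝ) :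
    ((chebT k (fun i => Real.cos (2 * Real.pi * t i)) : ℝ) : ℂ)
      = ((∏ i, (if k i = 0 then (1:ℝ) else Real.sqrt 2) : ℝ) : ℂ) / 2 ^ d *
        ∑ l : Fin d → Bool, Complex.exp (2 * Real.pi * Complex.I * ∑ i, (sgn l k i : ℂ) * t i) := by
  rw [chebT_cos, Complex.ofReal_prod]
  have hW : (((∏ i, (if k i = 0 then (1:ℝ) else Real.sqrt 2)) : ℝ) : ℂ)
      = ∏ i, (if k i = 0 then (1:ℂ) else (Real.sqrt 2 : ℂ)) := by
    rw [Complex.ofReal_prod]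
    refine Finset.prod_congr rfl fun i _ => ?_
    by_cases hk : k i = 0 <;> simp [hk]
  have claim1 : ∀ i : Fin d,
      (((if k i = 0 then (1:ℝ) else Real.sqrt 2) * Real.cos (2 * Real.pi * (k i * t i)) : ℝ) : ℂ)
        = ∑ b ∈ (Finset.univ : Finset Bool),
            (if k i = 0 then (1:ℂ) else (Real.sqrt 2 : ℂ)) / 2 *
              Complex.exp (2 * Real.pi * Complex.I *
                ((if b then (k i : ℂ) else -(k i : ℂ)) * t i)) := by
    intro i
    rw [Fintype.sum_bool, Complex.ofReal_mul, Complex.ofReal_cos, Complex.cos]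
    have hT : (if (true : Bool) = true then (k i : ℂ) else -(k i : ℂ)) = (k i : ℂ) := rfl
    have hF : (if (false : Bool) = true then (k i : ℂ) else -(k i : ℂ)) = -(k i : ℂ) := rfl
    rw [hT, hF]
    have e1 : ((2 * Real.pi * ((k i : ℝ) * t i) : ℝ) : ℂ) * Complex.I
        = 2 * Real.pi * Complex.I * ((k i : ℂ) * t i) := by push_cast; ring
    have e2 : -((2 * Real.pi * ((k i : ℝ) * t i) : ℝ) : ℂ) * Complex.I
        = 2 * Real.pi * Complex.I * (-(k i : ℂ) * t i) := by push_cast; ring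
    rw [e1, e2]
    by_cases hk : k i = 0 <;> simp [hk] <;> ring
  rw [Finset.prod_congr rfl fun i _ => claim1 i, Finset.prod_univ_sum]
  rw [Fintype.piFinset_univ, Finset.mul_sum]
  refine Finset.sum_congr rfl fun l _ => ?_
  rw [Finset.prod_mul_distrib, Finset.prod_div_distrib, Finset.prod_const, ← Complex.exp_sum]
  have hE : ∀ i, 2 * Real.pi * Complex.I * ((if l i then (k i : ℂ) else -(k i : ℂ)) * t i)
      = 2 * Real.pi * Complex.I * ((sgn l k i : ℂ) * t i) := by
    intro i
    by_cases hl : l i <;> simp [sgn, hl]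
  simp_rw [hE]
  rw [hW, Finset.card_univ, Fintype.card_fin]
  simp_rw [← Finset.mul_sum]

def idot {M : ℕ} (h : Fin d → ℤ) (z : Fin d → Fin M) : ℤ := ∑ i, h i * (z i : ℤ)

noncomputable def zet (M : ℕ) : ℂ := Complex.exp (2 * Real.pi * Complex.I / M)

lemma chebT_lattice {M : ℕ} (hM : M ≠ 0) (k : Fin d → ℕ) (z : Fin d → Fin M) (j : Fin M) :
    ((chebT k (fun i => Real.cos (2 * Real.pi * ((j : ℕ) : ℝ) / (M : ℝ) * ((z i : ℕ) : ℝ))) : ℝ) : ℂ)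
      = ((∏ i, (if k i = 0 then (1:ℝ) else Real.sqrt 2) : ℝ) : ℂ) / 2 ^ d *
        ∑ l : Fin d → Bool, zet M ^ (((j : ℕ) : ℤ) * idot (sgn l k) z) := by
  have hMR : ((M : ℝ)) ≠ 0 := Nat.cast_ne_zero.mpr hM
  have hMC : ((M : ℂ)) ≠ 0 := Nat.cast_ne_zero.mpr hM
  set t : Fin d → ℝ := fun i => ((j : ℕ) : ℝ) * ((z i : ℕ) : ℝ) / (M : ℝ) with ht
  have hx : (fun i => Real.cos (2 * Real.pi * ((j : ℕ) : ℝ) / (M : ℝ) * ((z i : ℕ) : ℝ)))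
      = fun i => Real.cos (2 * Real.pi * t i) := by
    funext i
    rw [ht]
    congr 1
    field_simp
  rw [hx, chebT_exp]
  congr 1
  refine Finset.sum_congr rfl fun l _ => ?_
  have hexp : zet M ^ (((j : ℕ) : ℤ) * idot (sgn l k) z)
      = Complex.exp ((((j : ℕ) : ℤ) * idot (sgn l k) z : ℤ) * (2 * Real.pi * Complex.I / M)) := by
    rw [Complex.exp_int_mul, zet]
  rw [hexp]
  congr 1
  rw [idot]
  simp only [ht]
  push_cast
  have hfact : ∑ x, (sgn l k x : ℂ) * (((j:ℕ):ℂ) * ((z x : ℕ):ℂ) / (M:ℂ))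
      = (∑ x, (sgn l k x : ℂ) * ((z x : ℕ):ℂ)) * (((j:ℕ):ℂ) / (M:ℂ)) := by
    rw [Finset.sum_mul]
    refine Finset.sum_congr rfl fun i _ => ?_
    field_simp
  rw [hfact]
  field_simp



lemma zet_ne_zero (M : ℕ) : zet M ≠ 0 := Complex.exp_ne_zero _

lemma expsum (M : ℕ) (hM : M ≠ 0) (m : ℤ) :
    ∑ j : Fin M, zet M ^ ((j : ℤ) * m) = if (M : ℤ) ∣ m then (M : ℂ) else 0 := by
  have hprim : IsPrimitiveRoot (zet M) M := Complex.isPrimitiveRoot_exp M hM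
  have hrw : ∀ j : Fin M, zet M ^ ((j : ℤ) * m) = (zet M ^ m) ^ (j : ℕ) := by
    intro j
    rw [mul_comm, zpow_mul]
    norm_cast
  simp_rw [hrw]
  by_cases hdvd : (M : ℤ) ∣ m
  · have : zet M ^ m = 1 := (hprim.zpow_eq_one_iff_dvd m).mpr hdvd
    simp [this, hdvd]
  · have hne : zet M ^ m ≠ 1 := fun h => hdvd ((hprim.zpow_eq_one_iff_dvd m).mp h)
    rw [if_neg hdvd, Fin.sum_univ_eq_sum_range (fun j => (zet M ^ m) ^ j) M,
      geom_sum_eq hne]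
    have : (zet M ^ m) ^ M = 1 := by
      rw [← zpow_natCast, ← zpow_mul, mul_comm, zpow_mul, zpow_natCast, hprim.pow_eq_one,
        one_zpow]
    rw [this]
    simp

noncomputable def W {d : ℕ} (k : Fin d → ℕ) : ℝ :=
  ∏ i, (if k i = 0 then (1:ℝ) else Real.sqrt 2)

lemma W_pos (k : Fin d → ℕ) : 0 < W k := by
  refine Finset.prod_pos fun i _ => ?_
  by_cases hk : k i = 0 <;> simp [hk, Real.sqrt_pos]

def intCast (k : Fin d → ℕ) : Fin d → ℤ := fun i => (k i : ℤ)

lemma sgn_true (k : Fin d → ℕ) : sgn (fun _ => true) k = intCast k := by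
  funext i; simp [sgn, intCast]

lemma rank_of_good (I : Finset (Fin d → ℕ)) {L M : ℕ} (hM : M ≠ 0)
    (zs : Fin L → Fin d → Fin M)
    (hgood : ∀ k ∈ I, ∃ ℓ : Fin L, ∀ h ∈ mirrorSet I, h ∉ mirror k →
      ¬ ((M:ℤ) ∣ (idot h (zs ℓ) - idot (intCast k) (zs ℓ)))) :
    (chebMatrix (cosLattices L M zs) I).rank = I.card := by
  set A := chebMatrix (cosLattices L M zs) I with hA
  suffices inj : Function.Injective A.mulVecLin by
    rw [Matrix.rank, LinearMap.finrank_range_of_inj inj, Module.finrank_pi, Fintype.card_coe]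
  rw [← LinearMap.ker_eq_bot, LinearMap.ker_eq_bot']
  intro v hv
  funext k₀
  obtain ⟨ℓ, hℓ⟩ := hgood k₀.1 k₀.2
  set z := zs ℓ with hz
  set pt : Fin M → (Fin d → ℝ) := fun j =>
    fun i => Real.cos (2 * Real.pi * ((j : ℕ) : ℝ) / (M : ℝ) * ((z i : ℕ) : ℝ)) with hpt
  have hmem : ∀ j : Fin M, pt j ∈ cosLattices L M zs := by
    intro j
    simp only [cosLattices, Finset.mem_image]
    exact ⟨(ℓ, j), Finset.mem_univ _, rfl⟩
  have hzero : ∀ j : Fin M, ∑ k : {k // k ∈ I}, chebT k.1 (pt j) * v k = 0 := by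
    intro j
    have := congrFun hv ⟨pt j, hmem j⟩
    simpa [Matrix.mulVecLin_apply, Matrix.mulVec, dotProduct, hA, chebMatrix] using this
  set σ : ℤ := idot (intCast k₀.1) z with hσ
  set S : ℂ := ∑ j : Fin M, ((∑ k : {k // k ∈ I}, chebT k.1 (pt j) * v k : ℝ) : ℂ) *
      zet M ^ (-(((j : ℕ) : ℤ)) * σ) with hS
  have hS0 : S = 0 := by
    rw [hS]
    refine Finset.sum_eq_zero fun j _ => ?_
    rw [hzero j]
    simp
  -- T k counts matching sign patterns
  set T : {k // k ∈ I} → ℝ := fun k =>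
    ∑ l : Fin d → Bool, (if (M:ℤ) ∣ (idot (sgn l k.1) z - σ) then (M:ℝ) else 0) with hT
  have hSalt : S = ∑ k : {k // k ∈ I}, (v k : ℂ) * (((W k.1 / 2 ^ d : ℝ) : ℂ) * ((T k : ℝ) : ℂ)) := by
    rw [hS]
    have hstep : ∀ j : Fin M, ((∑ k : {k // k ∈ I}, chebT k.1 (pt j) * v k : ℝ) : ℂ) *
        zet M ^ (-(((j : ℕ) : ℤ)) * σ)
        = ∑ k : {k // k ∈ I}, (v k : ℂ) * (((W k.1 : ℝ) : ℂ) / 2 ^ d *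
            ∑ l : Fin d → Bool, zet M ^ (((j : ℕ) : ℤ) * idot (sgn l k.1) z
              + (-(((j : ℕ) : ℤ)) * σ))) := by
      intro j
      rw [Complex.ofReal_sum, Finset.sum_mul]
      refine Finset.sum_congr rfl fun k _ => ?_
      rw [Complex.ofReal_mul]
      have hc := chebT_lattice hM k.1 z j
      rw [hpt] at *
      rw [hc]
      unfold W
      simp only [Finset.mul_sum, Finset.sum_mul]
      refine Finset.sum_congr rfl fun l _ => ?_
      rw [zpow_add₀ (zet_ne_zero M)]
      ring
    rw [Finset.sum_congr rfl fun j _ => hstep j, Finset.sum_comm]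
    refine Finset.sum_congr rfl fun k _ => ?_
    rw [← Finset.mul_sum]
    congr 1
    rw [← Finset.mul_sum]
    rw [hT]
    push_cast
    congr 1
    rw [Finset.sum_comm]
    refine Finset.sum_congr rfl fun l _ => ?_
    have : ∀ j : Fin M, (((j : ℕ) : ℤ) * idot (sgn l k.1) z + (-(((j : ℕ) : ℤ)) * σ))
        = ((j : ℕ) : ℤ) * (idot (sgn l k.1) z - σ) := by intro j; ring
    simp_rw [this]
    rw [expsum M hM]
    by_cases hdvd : (M:ℤ) ∣ (idot (sgn l k.1) z - σ) <;> simp [hdvd]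
  -- all terms with k ≠ k₀ vanish
  have hTzero : ∀ k : {k // k ∈ I}, k ≠ k₀ → T k = 0 := by
    intro k hk
    rw [hT]
    refine Finset.sum_eq_zero fun l _ => ?_
    rw [if_neg]
    refine hℓ (sgn l k.1) ?_ ?_
    · exact Finset.mem_biUnion.mpr ⟨k.1, k.2, sgn_mem_mirror l k.1⟩
    · intro hmem2
      exact hk (Subtype.ext (mirror_disjoint (sgn_mem_mirror l k.1) hmem2))
  have hSk : S = (v k₀ : ℂ) * (((W k₀.1 / 2 ^ d : ℝ) : ℂ) * ((T k₀ : ℝ) : ℂ)) := by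
    rw [hSalt]
    rw [Finset.sum_eq_single k₀]
    · intro k _ hk
      rw [hTzero k hk]
      simp
    · intro h
      exact absurd (Finset.mem_univ k₀) h
  have hTpos : 0 < T k₀ := by
    rw [hT]
    have h0 : (if (M:ℤ) ∣ (idot (sgn (fun _ => true) k₀.1) z - σ) then (M:ℝ) else 0) = (M:ℝ) := by
      rw [if_pos]
      rw [sgn_true, hσ]
      simp
    have hle : (if (M:ℤ) ∣ (idot (sgn (fun _ : Fin d => true) k₀.1) z - σ) then (M:ℝ) else 0)
        ≤ ∑ l : Fin d → Bool, (if (M:ℤ) ∣ (idot (sgn l k₀.1) z - σ) then (M:ℝ) else 0) :=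
      Finset.single_le_sum
        (f := fun l : Fin d → Bool => (if (M:ℤ) ∣ (idot (sgn l k₀.1) z - σ) then (M:ℝ) else 0))
        (fun l _ => by
          by_cases hdvd : (M:ℤ) ∣ (idot (sgn l k₀.1) z - σ) <;> simp [hdvd])
        (Finset.mem_univ (fun _ : Fin d => true))
    rw [h0] at hle
    have h2 : (0:ℝ) < (M:ℝ) := by exact_mod_cast Nat.pos_of_ne_zero hM
    exact lt_of_lt_of_le h2 hle
  have hfac : ((W k₀.1 / 2 ^ d : ℝ) : ℂ) * ((T k₀ : ℝ) : ℂ) ≠ 0 := by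
    rw [← Complex.ofReal_mul, Complex.ofReal_ne_zero]
    have h1 : 0 < W k₀.1 / 2 ^ d := by
      apply div_pos (W_pos k₀.1)
      positivity
    exact ne_of_gt (mul_pos h1 hTpos)
  have := hS0 ▸ hSk
  have hv0 : (v k₀ : ℂ) = 0 := by
    rcases mul_eq_zero.mp this.symm with h | h
    · exact h
    · exact absurd h hfac
  exact_mod_cast hv0

lemma int_eq_zero_of_dvd_of_abs_lt {a M : ℤ} (hM : 0 < M) (h : M ∣ a) (h2 : |a| < M) :
    a = 0 := by
  rcases h with ⟨t, rfl⟩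
  rcases abs_lt.mp h2 with ⟨h3, h4⟩
  have ht1 : t < 1 := by
    by_contra hh; push_neg at hh; nlinarith
  have ht2 : -1 < t := by
    by_contra hh; push_neg at hh; nlinarith
  have : t = 0 := by omega
  simp [this]

lemma solcount {M : ℕ} (hM : Nat.Prime M) (cvec : Fin d → ℤ) (i₀ : Fin d)
    (hc : ¬ ((M:ℤ) ∣ cvec i₀)) :
    ((Finset.univ.filter fun z : Fin d → Fin M => (M:ℤ) ∣ idot cvec z)).card ≤ M ^ (d - 1) := by
  classical
  have hMpos : 0 < M := hM.pos
  set z0 : Fin M := ⟨0, hMpos⟩ with hz0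
  set Tgt : Finset (Fin d → Fin M) :=
    Fintype.piFinset (fun i => if i = i₀ then {z0} else Finset.univ) with hTgt
  have hTgtcard : Tgt.card = M ^ (d - 1) := by
    rw [hTgt, Fintype.card_piFinset]
    have hsplit := Finset.mul_prod_erase Finset.univ
      (fun i => ((if i = i₀ then ({z0} : Finset (Fin M)) else Finset.univ)).card)
      (Finset.mem_univ i₀)
    beta_reduce at hsplit
    rw [← hsplit, if_pos rfl, Finset.card_singleton, one_mul]
    have : ∀ i ∈ Finset.univ.erase i₀,
        ((if i = i₀ then ({z0} : Finset (Fin M)) else Finset.univ)).card = M := by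
      intro i hi
      rw [if_neg (Finset.ne_of_mem_erase hi), Finset.card_univ, Fintype.card_fin]
    rw [Finset.prod_congr rfl this, Finset.prod_const, Finset.card_erase_of_mem (Finset.mem_univ i₀),
      Finset.card_univ, Fintype.card_fin]
  rw [← hTgtcard]
  refine Finset.card_le_card_of_injOn (fun z => Function.update z i₀ z0) ?_ ?_
  · intro z _
    rw [hTgt, Finset.mem_coe, Fintype.mem_piFinset]
    intro i
    by_cases hi : i = i₀
    · subst hi
      rw [if_pos rfl]
      simp
    · rw [if_neg hi]
      exact Finset.mem_univ _
  · intro z hzm z' hzm' heq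
    simp only [Finset.coe_filter, Set.mem_setOf_eq, Finset.mem_univ, true_and] at hzm hzm'
    have hoff : ∀ i, i ≠ i₀ → z i = z' i := by
      intro i hi
      have := congrFun heq i
      simpa [Function.update_of_ne hi] using this
    have hdvd : (M:ℤ) ∣ cvec i₀ * ((z i₀ : ℤ) - (z' i₀ : ℤ)) := by
      have hdiff : idot cvec z - idot cvec z' = cvec i₀ * ((z i₀ : ℤ) - (z' i₀ : ℤ)) := by
        rw [idot, idot, ← Finset.sum_sub_distrib]
        rw [← Finset.add_sum_erase _ _ (Finset.mem_univ i₀)]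
        have hrest : ∑ i ∈ Finset.univ.erase i₀,
            (cvec i * ((z i : ℕ) : ℤ) - cvec i * ((z' i : ℕ) : ℤ)) = 0 := by
          refine Finset.sum_eq_zero fun i hi => ?_
          rw [hoff i (Finset.ne_of_mem_erase hi)]
          ring
        rw [hrest, add_zero]
        push_cast
        ring
      rw [← hdiff]
      exact dvd_sub hzm hzm'
    have : (M:ℤ) ∣ ((z i₀ : ℤ) - (z' i₀ : ℤ)) := by
      rcases Int.Prime.dvd_mul' hM hdvd with h | h
      · exact absurd h hc
      · exact h
    have habs : |((z i₀ : ℤ) - (z' i₀ : ℤ))| < M := by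
      have h1 : ((z i₀ : ℕ) : ℤ) < M := by exact_mod_cast (z i₀).2
      have h2 : ((z' i₀ : ℕ) : ℤ) < M := by exact_mod_cast (z' i₀).2
      have h3 : (0:ℤ) ≤ ((z i₀ : ℕ) : ℤ) := by positivity
      have h4 : (0:ℤ) ≤ ((z' i₀ : ℕ) : ℤ) := by positivity
      rw [abs_lt]
      constructor <;> omega
    have hMz : (0:ℤ) < M := by exact_mod_cast hMpos
    have := int_eq_zero_of_dvd_of_abs_lt hMz this habs
    have hval : (z i₀ : ℤ) = (z' i₀ : ℤ) := by omega
    have hi₀ : z i₀ = z' i₀ := by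
      apply Fin.ext
      exact_mod_cast hval
    funext i
    by_cases hi : i = i₀
    · rw [hi]; exact hi₀
    · exact hoff i hi

lemma badcard {M : ℕ} (hM : Nat.Prime M) (I : Finset (Fin d → ℕ))
    (hinj : Set.InjOn (fun h : Fin d → ℤ => fun i => h i % (M : ℤ)) (mirrorSet I))
    (k : Fin d → ℕ) (hk : k ∈ I) :
    ((Finset.univ.filter fun z : Fin d → Fin M => ∃ h ∈ mirrorSet I, h ∉ mirror k ∧
        (M:ℤ) ∣ (idot h z - idot (intCast k) z))).card
      ≤ ((mirrorSet I).card - 1) * M ^ (d - 1) := by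
  classical
  have hsub : (Finset.univ.filter fun z : Fin d → Fin M => ∃ h ∈ mirrorSet I, h ∉ mirror k ∧
        (M:ℤ) ∣ (idot h z - idot (intCast k) z))
      ⊆ (mirrorSet I \ mirror k).biUnion (fun h =>
          Finset.univ.filter fun z : Fin d → Fin M => (M:ℤ) ∣ idot (h - intCast k) z) := by
    intro z hz
    rw [Finset.mem_filter] at hz
    obtain ⟨-, h, hh1, hh2, hh3⟩ := hz
    refine Finset.mem_biUnion.mpr ⟨h, Finset.mem_sdiff.mpr ⟨hh1, hh2⟩, ?_⟩
    rw [Finset.mem_filter]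
    refine ⟨Finset.mem_univ _, ?_⟩
    have : idot (h - intCast k) z = idot h z - idot (intCast k) z := by
      rw [idot, idot, idot, ← Finset.sum_sub_distrib]
      refine Finset.sum_congr rfl fun i _ => ?_
      simp [sub_mul]
    rw [this]
    exact hh3
  refine le_trans (Finset.card_le_card hsub) ?_
  refine le_trans (Finset.card_biUnion_le) ?_
  have hker : intCast k ∈ mirror k := by rw [← sgn_true]; exact sgn_mem_mirror _ k
  have hkM : intCast k ∈ mirrorSet I := Finset.mem_biUnion.mpr ⟨k, hk, hker⟩
  have hbound : ∀ h ∈ mirrorSet I \ mirror k,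
      ((Finset.univ.filter fun z : Fin d → Fin M => (M:ℤ) ∣ idot (h - intCast k) z)).card
        ≤ M ^ (d - 1) := by
    intro h hh
    rw [Finset.mem_sdiff] at hh
    obtain ⟨hh1, hh2⟩ := hh
    have hne : h ≠ intCast k := fun he => hh2 (he ▸ hker)
    have hmodne : (fun i => h i % (M:ℤ)) ≠ (fun i => intCast k i % (M:ℤ)) := by
      intro hmod
      exact hne (hinj hh1 hkM hmod)
    have : ∃ i₀, h i₀ % (M:ℤ) ≠ intCast k i₀ % (M:ℤ) := by
      by_contra hco
      push_neg at hco
      exact hmodne (funext hco)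
    obtain ⟨i₀, hi₀⟩ := this
    have hcdvd : ¬ ((M:ℤ) ∣ (h - intCast k) i₀) := by
      intro hdvd
      apply hi₀
      have hdvd2 : (M:ℤ) ∣ (h i₀ - intCast k i₀) := by simpa [Pi.sub_apply] using hdvd
      have hmq : intCast k i₀ ≡ h i₀ [ZMOD (M:ℤ)] := Int.modEq_iff_dvd.mpr hdvd2
      exact hmq.symm
    exact solcount hM (h - intCast k) i₀ hcdvd
  refine le_trans (Finset.sum_le_card_nsmul _ _ _ hbound) ?_
  rw [smul_eq_mul]
  have hcard : (mirrorSet I \ mirror k).card ≤ (mirrorSet I).card - 1 := by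
    have hsub2 : mirror k ⊆ mirrorSet I := fun x hx => Finset.mem_biUnion.mpr ⟨k, hk, hx⟩
    rw [Finset.card_sdiff_of_subset hsub2]
    have : 1 ≤ (mirror k).card := Finset.card_pos.mpr ⟨intCast k, hker⟩
    omega
  exact Nat.mul_le_mul_right _ hcard

end S17
lemma flog_deriv {x : ℝ} (hx : x ≠ 0) :
    HasDerivAt (fun y : ℝ => Real.log y - 2*(1 - y⁻¹)^2)
      (x⁻¹ - 2*(2*(1 - x⁻¹)*(x^2)⁻¹)) x := by
  have h1 := Real.hasDerivAt_log hx
  have h2 := hasDerivAt_inv hx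
  have h3 := (hasDerivAt_const x (1:ℝ)).sub h2
  have h4 := h3.pow 2
  have h5 := h4.const_mul (2:ℝ)
  have h6 := h1.sub h5
  refine h6.congr_deriv ?_
  push_cast [Pi.sub_apply]
  ring

lemma two_sq_le_log {c : ℝ} (hc : 1 < c) : 2 * ((c-1)/c)^2 ≤ Real.log c := by
  have hmono : MonotoneOn (fun y : ℝ => Real.log y - 2*(1 - y⁻¹)^2) (Set.Ici 1) := by
    apply monotoneOn_of_deriv_nonneg (convex_Ici 1)
    · intro x hx
      have hx0 : x ≠ 0 := by
        have : (1:ℝ) ≤ x := hx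
        linarith
      exact (flog_deriv hx0).continuousAt.continuousWithinAt
    · intro x hx
      rw [interior_Ici] at hx
      have hx0 : x ≠ 0 := by
        have : (1:ℝ) < x := hx
        linarith
      exact (flog_deriv hx0).differentiableAt.differentiableWithinAt
    · intro x hx
      rw [interior_Ici] at hx
      have hx1 : (1:ℝ) < x := hx
      have hx0 : (0:ℝ) < x := by linarith
      rw [(flog_deriv (ne_of_gt hx0)).deriv]
      have heq : x⁻¹ - 2*(2*(1 - x⁻¹)*(x^2)⁻¹) = (x-2)^2/x^3 := by
        field_simp
        ring
      rw [heq]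
      positivity
  have h01 := hmono (Set.mem_Ici.mpr le_rfl) (Set.mem_Ici.mpr hc.le) hc.le
  simp only [Real.log_one, inv_one, sub_self] at h01
  have hcc : (c-1)/c = 1 - c⁻¹ := by
    have : c ≠ 0 := by linarith
    field_simp
  rw [hcc]
  norm_num at h01
  linarith

theorem stmt17aux {d : ℕ} (I : Finset (Fin d → ℕ))
    (c δ : ℝ) (hc : 1 < c) (hδ : δ ∈ Set.Ioc (0 : ℝ) 1)
    (L : ℕ) (hL : (c / (c - 1)) ^ 2 * (Real.log I.card - Real.log δ) / 2 ≤ (L : ℝ))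
    (M : ℕ) (hM : Nat.Prime M) (hMc : c * ((mirrorSet I).card - 1) ≤ (M : ℝ))
    (hinj : Set.InjOn (fun h : Fin d → ℤ => fun i => h i % (M : ℤ)) (mirrorSet I)) :
    (1 - δ) * (((M ^ d : ℕ) : ℝ) ^ (L : ℕ)) ≤
      ((Finset.univ.filter fun zs : Fin L → Fin d → Fin M =>
          (chebMatrix (cosLattices L M zs) I).rank = I.card).card : ℝ) := by
  classical
  obtain ⟨hδ0, hδ1⟩ := hδ
  have hMne : M ≠ 0 := hM.pos.ne'
  have htot : (Finset.univ : Finset (Fin L → Fin d → Fin M)).card = (M ^ d) ^ L := by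
    simp [Finset.card_univ, Fintype.card_fun]
  by_cases hI : I.Nonempty
  swap
  · rw [Finset.not_nonempty_iff_eq_empty] at hI
    subst hI
    have hall : ∀ zs : Fin L → Fin d → Fin M,
        (chebMatrix (cosLattices L M zs) (∅ : Finset (Fin d → ℕ))).rank
          = (∅ : Finset (Fin d → ℕ)).card := by
      intro zs
      have h1 := Matrix.rank_le_card_width (chebMatrix (cosLattices L M zs) ∅)
      simp only [Fintype.card_coe, Finset.card_empty] at h1 ⊢
      omega
    rw [Finset.filter_true_of_mem fun zs _ => hall zs]
    rw [htot]
    push_cast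
    have hX : (0:ℝ) ≤ ((M:ℝ)^d)^L := by positivity
    nlinarith
  by_cases hδeq : δ = 1
  · subst hδeq
    simp only [sub_self, zero_mul]
    positivity
  have hδlt : δ < 1 := lt_of_le_of_ne hδ1 hδeq
  have hc0 : (0:ℝ) < c := lt_trans one_pos hc
  have hc1 : (0:ℝ) < c - 1 := by linarith
  have hIc : 1 ≤ I.card := Finset.card_pos.mpr hI
  have hlogI : 0 ≤ Real.log I.card := Real.log_nonneg (by exact_mod_cast hIc)
  have hlogδ : Real.log δ < 0 := Real.log_neg hδ0 hδlt
  have hD : 0 < Real.log I.card - Real.log δ := by linarith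
  have hLpos : 0 < L := by
    by_contra h
    push_neg at h
    have hL0 : L = 0 := by omega
    subst hL0
    have : (0:ℝ) < (c / (c - 1)) ^ 2 * (Real.log I.card - Real.log δ) / 2 := by positivity
    simp only [Nat.cast_zero] at hL
    linarith
  have hlogc : 2*((c-1)/c)^2 ≤ Real.log c := two_sq_le_log hc
  have hlogcpos : 0 < Real.log c := Real.log_pos hc
  have hLlog : Real.log I.card - Real.log δ ≤ L * Real.log c := by
    have h1 : (c/(c-1))^2 * (Real.log I.card - Real.log δ)/2 * Real.log c
        ≤ (L:ℝ) * Real.log c := mul_le_mul_of_nonneg_right hL hlogcpos.le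
    have hst : (c/(c-1)) * ((c-1)/c) = 1 := by field_simp
    have hq : 1 ≤ (c/(c-1))^2 * Real.log c / 2 := by
      have hs2 : (0:ℝ) < (c/(c-1))^2 := by positivity
      have h3 := mul_le_mul_of_nonneg_left hlogc hs2.le
      have h4 : (c/(c-1))^2 * (2*((c-1)/c)^2) = 2 := by
        have : (c/(c-1))^2 * ((c-1)/c)^2 = ((c/(c-1)) * ((c-1)/c))^2 := by ring
        rw [mul_comm (2:ℝ) _, ← mul_assoc, this, hst]
        norm_num
      rw [h4] at h3
      linarith
    have h2 : Real.log I.card - Real.log δ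
        ≤ (c/(c-1))^2 * (Real.log I.card - Real.log δ)/2 * Real.log c := by
      have := mul_le_mul_of_nonneg_left hq hD.le
      calc Real.log I.card - Real.log δ
          = (Real.log I.card - Real.log δ) * 1 := by ring
        _ ≤ (Real.log I.card - Real.log δ) * ((c/(c-1))^2 * Real.log c / 2) := this
        _ = (c/(c-1))^2 * (Real.log I.card - Real.log δ)/2 * Real.log c := by ring
    linarith
  have hcard_le : (I.card : ℝ) ≤ δ * c^L := by
    have hexp := Real.exp_log (show (0:ℝ) < I.card by exact_mod_cast hIc)
    calc (I.card:ℝ) = Real.exp (Real.log I.card) := hexp.symm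
      _ ≤ Real.exp (Real.log δ + L * Real.log c) := Real.exp_le_exp.mpr (by linarith)
      _ = δ * c^L := by
          rw [Real.exp_add, Real.exp_log hδ0, ← Real.log_pow, Real.exp_log (pow_pos hc0 L)]
  set B : ℕ := ((mirrorSet I).card - 1) * M^(d-1) with hB
  set Bd : (Fin d → ℕ) → Finset (Fin d → Fin M) := fun k =>
    Finset.univ.filter fun z => ∃ h ∈ mirrorSet I, h ∉ mirror k ∧
      (M:ℤ) ∣ (S17.idot h z - S17.idot (S17.intCast k) z) with hBd
  set Gd : (Fin L → Fin d → Fin M) → Prop := fun zs => ∀ k ∈ I, ∃ ℓ,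
    ∀ h ∈ mirrorSet I, h ∉ mirror k →
      ¬((M:ℤ) ∣ S17.idot h (zs ℓ) - S17.idot (S17.intCast k) (zs ℓ)) with hGd
  have hGdsub : Finset.univ.filter Gd ⊆ Finset.univ.filter
      (fun zs => (chebMatrix (cosLattices L M zs) I).rank = I.card) := by
    intro zs hzs
    rw [Finset.mem_filter] at hzs ⊢
    exact ⟨hzs.1, S17.rank_of_good I hMne zs hzs.2⟩
  have hbadsub : Finset.univ.filter (fun zs => ¬ Gd zs)
      ⊆ I.biUnion (fun k => Fintype.piFinset fun _ : Fin L => Bd k) := by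
    intro zs hzs
    rw [Finset.mem_filter] at hzs
    obtain ⟨-, hzs⟩ := hzs
    have hzs' : ¬ ∀ k ∈ I, ∃ ℓ, ∀ h ∈ mirrorSet I, h ∉ mirror k →
        ¬((M:ℤ) ∣ S17.idot h (zs ℓ) - S17.idot (S17.intCast k) (zs ℓ)) := hzs
    push_neg at hzs'
    obtain ⟨k, hkI, hk⟩ := hzs'
    refine Finset.mem_biUnion.mpr ⟨k, hkI, Fintype.mem_piFinset.mpr fun ℓ => ?_⟩
    rw [hBd]
    rw [Finset.mem_filter]
    obtain ⟨h, hh1, hh2, hh3⟩ := hk ℓ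
    exact ⟨Finset.mem_univ _, h, hh1, hh2, hh3⟩
  have hbadcard : (Finset.univ.filter (fun zs => ¬ Gd zs)).card ≤ I.card * B^L := by
    refine le_trans (Finset.card_le_card hbadsub) ?_
    refine le_trans Finset.card_biUnion_le ?_
    refine le_trans (Finset.sum_le_card_nsmul _ _ (B^L) ?_) (by rw [smul_eq_mul])
    intro k hkI
    calc (Fintype.piFinset fun _ : Fin L => Bd k).card = (Bd k).card ^ L := by
          rw [Fintype.card_piFinset, Finset.prod_const, Finset.card_univ, Fintype.card_fin]
      _ ≤ B^L := Nat.pow_le_pow_left (S17.badcard hM I hinj k hkI) L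
  have hBle : ((B : ℕ) : ℝ) ≤ (M:ℝ)^d / c := by
    by_cases hm : (mirrorSet I).card ≤ 1
    · have hz : (mirrorSet I).card - 1 = 0 := by omega
      rw [hB, hz, zero_mul]
      simp only [Nat.cast_zero]
      positivity
    · push_neg at hm
      have hd : 1 ≤ d := by
        by_contra hd0
        push_neg at hd0
        have hd00 : d = 0 := by omega
        subst hd00
        have : (mirrorSet I).card ≤ 1 :=
          Finset.card_le_one.mpr (fun a _ b _ => Subsingleton.elim a b)
        omega
      have h1 : ((mirrorSet I).card : ℝ) - 1 ≤ (M:ℝ)/c := by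
        rw [le_div_iff₀ hc0]
        linarith [hMc]
      have hcast : ((B : ℕ) : ℝ) = (((mirrorSet I).card : ℝ) - 1) * (M:ℝ)^(d-1) := by
        rw [hB]
        push_cast [Nat.cast_sub hm.le]
        ring
      rw [hcast]
      calc (((mirrorSet I).card : ℝ) - 1) * (M:ℝ)^(d-1)
          ≤ ((M:ℝ)/c) * (M:ℝ)^(d-1) := by
            apply mul_le_mul_of_nonneg_right h1
            positivity
        _ = (M:ℝ)^d / c := by
            rw [div_mul_eq_mul_div]
            congr 2
            rw [← pow_succ']
            congr 1
            omega
  -- real bound on bad count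
  have hbadreal : ((Finset.univ.filter (fun zs => ¬ Gd zs)).card : ℝ)
      ≤ δ * ((M:ℝ)^d)^L := by
    have h1 : ((Finset.univ.filter (fun zs => ¬ Gd zs)).card : ℝ)
        ≤ (I.card : ℝ) * ((B:ℕ):ℝ)^L := by
      exact_mod_cast hbadcard
    have h2 : ((B:ℕ):ℝ)^L ≤ ((M:ℝ)^d / c)^L :=
      pow_le_pow_left₀ (by positivity) hBle L
    have h3 : (I.card : ℝ) * ((B:ℕ):ℝ)^L ≤ (δ * c^L) * ((M:ℝ)^d / c)^L := by
      apply mul_le_mul hcard_le h2 (by positivity) (by positivity)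
    have h4 : (δ * c^L) * ((M:ℝ)^d / c)^L = δ * ((M:ℝ)^d)^L := by
      rw [div_pow]
      field_simp
    linarith
  have hsplit := Finset.card_filter_add_card_filter_not
    (s := (Finset.univ : Finset (Fin L → Fin d → Fin M))) (p := Gd)
  have hgoodreal : (((M^d:ℕ):ℝ))^L - δ * ((M:ℝ)^d)^L
      ≤ ((Finset.univ.filter Gd).card : ℝ) := by
    have h5 : ((Finset.univ.filter Gd).card : ℝ)
        = (((M^d)^L : ℕ) : ℝ) - ((Finset.univ.filter (fun zs => ¬ Gd zs)).card : ℝ) := by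
      rw [← htot]
      have := hsplit
      push_cast [← this]
      ring
    rw [h5]
    have hcast2 : (((M^d)^L : ℕ) : ℝ) = (((M^d:ℕ):ℝ))^L := by push_cast; ring
    rw [hcast2]
    linarith
  have hfinal : ((Finset.univ.filter Gd).card : ℝ)
      ≤ ((Finset.univ.filter fun zs : Fin L → Fin d → Fin M =>
          (chebMatrix (cosLattices L M zs) I).rank = I.card).card : ℝ) := by
    exact_mod_cast Finset.card_le_card hGdsub
  have hcast3 : (((M^d:ℕ):ℝ))^L = ((M:ℝ)^d)^L := by push_cast; ring
  calc (1 - δ) * (((M ^ d : ℕ) : ℝ) ^ (L : ℕ))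
      = (((M^d:ℕ):ℝ))^L - δ * (((M^d:ℕ):ℝ))^L := by ring
    _ = (((M^d:ℕ):ℝ))^L - δ * ((M:ℝ)^d)^L := by rw [hcast3]
    _ ≤ ((Finset.univ.filter Gd).card : ℝ) := hgoodreal
    _ ≤ _ := hfinal

/-- Theorem `prob_bound_T_cheb`: under the multiple-lattice construction,
with probability at least `1 - δ` (over the `L` i.i.d. uniform generating vectors) the
Chebyshev matrix on the union of cosine transformed rank-1 lattices has full column
rank `|I|`. -/
theorem stmt_17 {d : ℕ} (I : Finset (Fin d → ℕ))
    (c δ : ℝ) (hc : 1 < c) (hδ : δ ∈ Set.Ioc (0 : ℝ) 1)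
    (L : ℕ) (hL : (c / (c - 1)) ^ 2 * (Real.log I.card - Real.log δ) / 2 ≤ (L : ℝ))
    (M : ℕ) (hM : Nat.Prime M) (hMc : c * ((mirrorSet I).card - 1) ≤ (M : ℝ))
    (hinj : Set.InjOn (fun h : Fin d → ℤ => fun i => h i % (M : ℤ)) (mirrorSet I)) :
    (1 - δ) * (((M ^ d : ℕ) : ℝ) ^ (L : ℕ)) ≤
      ((Finset.univ.filter fun zs : Fin L → Fin d → Fin M =>
          (chebMatrix (cosLattices L M zs) I).rank = I.card).card : ℝ) := by
  exact stmt17aux I c δ hc hδ L hL M hM hMc hinj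
end
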